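/- arXiv:0911.1933 — 12 statements merged into one kernel-verified Lean document; each statement's English description precedes it below -/
import Mathlib

section
/- For a real number r and integer n ≥ 2, with f_n(x) = (rx - x²)ⁿ/n! and I_n = ∫₀ʳ f_n(x) sin x dx, the recurrence I_n = (4n-2)·I_{n-1} - r²·I_{n-2} holds. -/
theorem stmt_0 (r : ℝ) (I : ℕ → ℝ)
    (hI : ∀ n : ℕ, I n = ∫ x in (0:ℝ)..r, (r * x - x ^ 2) ^ n / (n.factorial : ℝ) * Real.sin x)
    (n : ℕ) (hn : 2 ≤ n) :
    I n = (4 * (n : ℝ) - 2) * I (n - 1) - r ^ 2 * I (n - 2) := by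
  obtain ⟨m, rfl⟩ : ∃ m, n = m + 2 := ⟨n - 2, by omega⟩
  have hsub1 : m + 2 - 1 = m + 1 := rfl
  have hsub2 : m + 2 - 2 = m := rfl
  rw [hsub1, hsub2]
  set u : ℝ → ℝ := fun x =>
    (r * x - x ^ 2) ^ (m + 1) * (r - 2 * x) / ((m + 1).factorial : ℝ) * Real.sin x
      - (r * x - x ^ 2) ^ (m + 2) / ((m + 2).factorial : ℝ) * Real.cos x with hu_def
  set D : ℝ → ℝ := fun x =>
    (r ^ 2 * ((r * x - x ^ 2) ^ m / (m.factorial : ℝ))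
      - (4 * (m : ℝ) + 6) * ((r * x - x ^ 2) ^ (m + 1) / ((m + 1).factorial : ℝ))
      + (r * x - x ^ 2) ^ (m + 2) / ((m + 2).factorial : ℝ)) * Real.sin x with hD_def
  have e1 : ((m + 1).factorial : ℝ) = ((m : ℝ) + 1) * (m.factorial : ℝ) := by
    rw [Nat.factorial_succ]; push_cast; ring
  have e2 : ((m + 2).factorial : ℝ) = ((m : ℝ) + 2) * (((m : ℝ) + 1) * (m.factorial : ℝ)) := by
    rw [Nat.factorial_succ, Nat.factorial_succ]; push_cast; ring
  have hm0 : (m.factorial : ℝ) ≠ 0 := Nat.cast_ne_zero.mpr m.factorial_ne_zero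
  have hg : ∀ x : ℝ, HasDerivAt (fun x => r * x - x ^ 2) (r - 2 * x) x := fun x => by
    have := ((hasDerivAt_id x).const_mul r).sub (hasDerivAt_pow 2 x)
    exact this.congr_deriv (by norm_num)
  have h3 : ∀ x : ℝ, HasDerivAt (fun x : ℝ => r - 2 * x) (-2) x := fun x => by
    have := (hasDerivAt_const x r).sub ((hasDerivAt_id x).const_mul 2)
    exact this.congr_deriv (by norm_num)
  have hu : ∀ x : ℝ, HasDerivAt u (D x) x := fun x => by
    have h1 := (hg x).pow (m + 1)
    have h2 := (hg x).pow (m + 2)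
    have hsin := Real.hasDerivAt_sin x
    have hcos := Real.hasDerivAt_cos x
    have key := ((((h1.mul (h3 x)).div_const ((m + 1).factorial : ℝ)).mul hsin).sub
      ((h2.div_const ((m + 2).factorial : ℝ)).mul hcos))
    refine key.congr_deriv ?_
    rw [hD_def]
    simp only [Nat.add_sub_cancel, Pi.pow_apply, Pi.mul_apply]
    rw [e1, e2]
    push_cast
    field_simp
    ring_nf
  have hDcont : Continuous D := by
    rw [hD_def]; fun_prop
  have hint : ∫ x in (0:ℝ)..r, D x = u r - u 0 :=
    intervalIntegral.integral_eq_sub_of_hasDerivAt (fun x _ => hu x)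
      (hDcont.intervalIntegrable 0 r)
  have hur : u r = 0 := by
    have h0 : r * r - r ^ 2 = 0 := by ring
    rw [hu_def]; simp [h0]
  have hu0 : u 0 = 0 := by
    rw [hu_def]; simp
  rw [hur, hu0, sub_zero] at hint
  -- split the integral
  have ci : ∀ k : ℕ, IntervalIntegrable
      (fun x => (r * x - x ^ 2) ^ k / (k.factorial : ℝ) * Real.sin x) MeasureTheory.volume 0 r :=
    fun k => (by fun_prop : Continuous fun x =>
      (r * x - x ^ 2) ^ k / (k.factorial : ℝ) * Real.sin x).intervalIntegrable 0 r
  have hsplit : ∫ x in (0:ℝ)..r, D x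
      = r ^ 2 * I m - (4 * (m : ℝ) + 6) * I (m + 1) + I (m + 2) := by
    rw [hI m, hI (m + 1), hI (m + 2), ← intervalIntegral.integral_const_mul,
      ← intervalIntegral.integral_const_mul,
      ← intervalIntegral.integral_sub ((ci m).const_mul _) ((ci (m + 1)).const_mul _),
      ← intervalIntegral.integral_add (((ci m).const_mul _).sub ((ci (m + 1)).const_mul _))
        (ci (m + 2))]
    apply intervalIntegral.integral_congr
    intro x _
    rw [hD_def]
    ring
  rw [hsplit] at hint
  have : ((m : ℝ) + 2) = ((m + 2 : ℕ) : ℝ) := by push_cast; ring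
  push_cast
  linarith
end

section
/- If r = a/b with a an integer and b a positive integer, then bⁿ·I_n → 0 as n → ∞, where I_n = ∫₀ʳ (rx - x²)ⁿ/n! · sin x dx. -/
theorem stmt_2 (a : ℤ) (b : ℕ) (hb : 0 < b) (r : ℝ) (hr : r = (a : ℝ) / (b : ℝ))
    (I : ℕ → ℝ)
    (hI : ∀ n : ℕ, I n = ∫ x in (0:ℝ)..r, (r * x - x ^ 2) ^ n / (n.factorial : ℝ) * Real.sin x) :
    Filter.Tendsto (fun n : ℕ => (b : ℝ) ^ n * I n) Filter.atTop (nhds 0) := by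
  have hInorm : ∀ n : ℕ, ‖I n‖ ≤ (2 * r ^ 2) ^ n / (n.factorial : ℝ) * |r| := by
    intro n
    rw [hI n]
    have hfac : (0:ℝ) < (n.factorial : ℝ) := by positivity
    have key := intervalIntegral.norm_integral_le_of_norm_le_const
      (a := (0:ℝ)) (b := r) (C := (2 * r ^ 2) ^ n / (n.factorial : ℝ))
      (f := fun x => (r * x - x ^ 2) ^ n / (n.factorial : ℝ) * Real.sin x) ?_
    · simpa using key
    · intro x hx
      have hxr : |x| ≤ |r| := by
        rw [abs_le]
        rcases Set.mem_uIoc.mp hx with ⟨h1, h2⟩ | ⟨h1, h2⟩ <;>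
          constructor <;> linarith [neg_abs_le r, le_abs_self r, abs_nonneg r]
      have h1 : |r * x - x ^ 2| ≤ 2 * r ^ 2 := by
        have h2 : |r * x - x ^ 2| ≤ |r * x| + |x ^ 2| := abs_sub _ _
        have h3 : |r * x| = |r| * |x| := abs_mul r x
        have h4 : |x ^ 2| = |x| ^ 2 := by rw [abs_pow]
        have h5 : |r| * |x| ≤ |r| * |r| := by nlinarith [abs_nonneg r, abs_nonneg x]
        have h6 : |x| ^ 2 ≤ |r| ^ 2 := by nlinarith [abs_nonneg x]
        have h7 : |r| * |r| = r ^ 2 := by rw [← abs_mul, ← sq, abs_sq]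
        have h8 : |r| ^ 2 = r ^ 2 := sq_abs r
        linarith
      have hsin : |Real.sin x| ≤ 1 := Real.abs_sin_le_one x
      calc ‖(r * x - x ^ 2) ^ n / (n.factorial : ℝ) * Real.sin x‖
          = |r * x - x ^ 2| ^ n / (n.factorial : ℝ) * |Real.sin x| := by
            rw [Real.norm_eq_abs, abs_mul, abs_div, abs_pow]
            simp [abs_of_pos hfac]
        _ ≤ (2 * r ^ 2) ^ n / (n.factorial : ℝ) * 1 := by
            apply mul_le_mul _ hsin (abs_nonneg _) (by positivity)
            gcongr
        _ = (2 * r ^ 2) ^ n / (n.factorial : ℝ) := mul_one _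
  have hg : Filter.Tendsto (fun n : ℕ => |r| * ((2 * (b:ℝ) * r ^ 2) ^ n / (n.factorial : ℝ)))
      Filter.atTop (nhds 0) := by
    have := (FloorSemiring.tendsto_pow_div_factorial_atTop (2 * (b:ℝ) * r ^ 2)).const_mul |r|
    simpa using this
  refine squeeze_zero_norm (fun n => ?_) hg
  have hb0 : (0:ℝ) ≤ (b:ℝ) ^ n := by positivity
  calc ‖(b : ℝ) ^ n * I n‖ = (b:ℝ) ^ n * ‖I n‖ := by
        rw [norm_mul, Real.norm_eq_abs, abs_of_nonneg hb0]
    _ ≤ (b:ℝ) ^ n * ((2 * r ^ 2) ^ n / (n.factorial : ℝ) * |r|) :=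
        mul_le_mul_of_nonneg_left (hInorm n) hb0
    _ = |r| * ((2 * (b:ℝ) * r ^ 2) ^ n / (n.factorial : ℝ)) := by
        rw [mul_pow (2 * (b:ℝ)) (r^2), mul_pow 2 (b:ℝ)]
        ring
end

section
/- For every n ≥ 0 there exist polynomials u_n, v_n with integer coefficients and degrees at most n such that I_n = u_n(r)·(1 - cos r) + v_n(r)·sin r, where I_n = ∫₀ʳ (rx - x²)ⁿ/n! · sin x dx. -/
open intervalIntegral Polynomial

lemma hasDeriv_f (r : ℝ) (n : ℕ) (x : ℝ) :
    HasDerivAt (fun x => (r*x - x^2)^(n+1) / ((n+1).factorial : ℝ))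
      ((r - 2*x) * ((r*x - x^2)^n / (n.factorial : ℝ))) x := by
  have h1 : HasDerivAt (fun x : ℝ => r*x - x^2) (r - 2*x) x := by
    exact (((hasDerivAt_id x).const_mul r).sub (hasDerivAt_pow 2 x)).congr_deriv (by simp)
  have h2 := (h1.pow (n+1)).div_const ((n+1).factorial : ℝ)
  convert h2 using 1
  all_goals try rfl
  have : ((n+1).factorial : ℝ) = (n+1) * n.factorial := by
    push_cast [Nat.factorial_succ]; ring
  rw [this]
  have hn : (n.factorial : ℝ) ≠ 0 := Nat.cast_ne_zero.mpr (Nat.factorial_ne_zero n)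
  field_simp
  simp only [Nat.add_sub_cancel]; push_cast; ring

lemma cont_f (r : ℝ) (n : ℕ) : Continuous (fun x : ℝ => (r*x - x^2)^n / (n.factorial : ℝ)) := by
  fun_prop

lemma rec_I (r : ℝ) (n : ℕ) :
    (∫ x in (0:ℝ)..r, (r * x - x ^ 2) ^ (n+2) / ((n+2).factorial : ℝ) * Real.sin x)
    = (4*n+6) * (∫ x in (0:ℝ)..r, (r * x - x ^ 2) ^ (n+1) / ((n+1).factorial : ℝ) * Real.sin x)
      - r^2 * (∫ x in (0:ℝ)..r, (r * x - x ^ 2) ^ n / (n.factorial : ℝ) * Real.sin x) := by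
  have hvcos : ∀ x : ℝ, HasDerivAt (fun x => -Real.cos x) (Real.sin x) x := fun x => by
    exact (Real.hasDerivAt_cos x).neg.congr_deriv (by simp)
  have hvsin : ∀ x : ℝ, HasDerivAt Real.sin (Real.cos x) x := Real.hasDerivAt_sin
  have h1 : HasDerivAt (fun x : ℝ => r*x - x^2) (r - 2*r) r := by
    exact (((hasDerivAt_id r).const_mul r).sub (hasDerivAt_pow 2 r)).congr_deriv (by simp)
  -- step 1
  have step1 := intervalIntegral.integral_mul_deriv_eq_deriv_mul (a := (0:ℝ)) (b := r)
    (u := fun x => (r*x - x^2)^(n+2) / ((n+2).factorial : ℝ))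
    (u' := fun x => (r - 2*x) * ((r*x - x^2)^(n+1) / ((n+1).factorial : ℝ)))
    (v := fun x => -Real.cos x) (v' := Real.sin)
    (fun x _ => hasDeriv_f r (n+1) x) (fun x _ => hvcos x)
    (by apply Continuous.intervalIntegrable; fun_prop)
    (by apply Continuous.intervalIntegrable; exact Real.continuous_sin)
  -- step 2
  have step2 := intervalIntegral.integral_mul_deriv_eq_deriv_mul (a := (0:ℝ)) (b := r)
    (u := fun x => (r - 2*x) * ((r*x - x^2)^(n+1) / ((n+1).factorial : ℝ)))
    (u' := fun x => (-2) * ((r*x - x^2)^(n+1) / ((n+1).factorial : ℝ))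
        + (r - 2*x) * ((r - 2*x) * ((r*x - x^2)^n / (n.factorial : ℝ))))
    (v := Real.sin) (v' := Real.cos)
    (fun x _ => by
      have ha : HasDerivAt (fun x : ℝ => r - 2*x) (-2) x := by
        exact ((hasDerivAt_const x r).sub ((hasDerivAt_id x).const_mul 2)).congr_deriv (by simp)
      exact ha.mul (hasDeriv_f r n x))
    (fun x _ => hvsin x)
    (by apply Continuous.intervalIntegrable; fun_prop)
    (by apply Continuous.intervalIntegrable; exact Real.continuous_cos)
  simp only [show r*r - r^2 = 0 by ring, show r*0 - (0:ℝ)^2 = 0 by ring,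
    zero_pow (Nat.succ_ne_zero _), zero_div, zero_mul, mul_zero, sub_zero, zero_sub,
    Real.sin_zero, Real.cos_zero] at step1 step2
  have flip : (∫ x in (0:ℝ)..r, (r - 2*x) * ((r*x - x^2)^(n+1)/((n+1).factorial:ℝ)) * -Real.cos x)
      = - ∫ x in (0:ℝ)..r, (r - 2*x) * ((r*x - x^2)^(n+1)/((n+1).factorial:ℝ)) * Real.cos x := by
    rw [← intervalIntegral.integral_neg]
    congr 1; funext x; ring
  rw [flip] at step1
  rw [step1, neg_neg, step2]
  have key : ∀ x : ℝ, (-2 * ((r * x - x ^ 2) ^ (n + 1) / ((n+1).factorial:ℝ)) +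
        (r - 2 * x) * ((r - 2 * x) * ((r * x - x ^ 2) ^ n / (n.factorial:ℝ)))) * Real.sin x
      = r^2 * ((r * x - x ^ 2) ^ n / (n.factorial:ℝ) * Real.sin x)
        - (4*n+6) * ((r * x - x ^ 2) ^ (n + 1) / ((n+1).factorial:ℝ) * Real.sin x) := by
    intro x
    have hfac : ((n+1).factorial : ℝ) = ((n:ℝ)+1) * n.factorial := by
      push_cast [Nat.factorial_succ]; ring
    have hn0 : (n.factorial:ℝ) ≠ 0 := Nat.cast_ne_zero.mpr (Nat.factorial_ne_zero n)
    have hn1 : ((n:ℝ)+1) ≠ 0 := by positivity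
    rw [hfac]
    field_simp
    ring
  simp only [key]
  rw [intervalIntegral.integral_sub (by apply Continuous.intervalIntegrable; fun_prop)
      (by apply Continuous.intervalIntegrable; fun_prop),
    intervalIntegral.integral_const_mul, intervalIntegral.integral_const_mul]
  ring

lemma I1_val (r : ℝ) : (∫ x in (0:ℝ)..r, (r * x - x ^ 2) ^ 1 / ((1:ℕ).factorial : ℝ) * Real.sin x)
    = 2*(1 - Real.cos r) - r * Real.sin r := by
  have hvcos : ∀ x : ℝ, HasDerivAt (fun x => -Real.cos x) (Real.sin x) x := fun x => by
    exact (Real.hasDerivAt_cos x).neg.congr_deriv (by simp)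
  have step1 := intervalIntegral.integral_mul_deriv_eq_deriv_mul (a := (0:ℝ)) (b := r)
    (u := fun x => r*x - x^2) (u' := fun x => r - 2*x)
    (v := fun x => -Real.cos x) (v' := Real.sin)
    (fun x _ => by exact (((hasDerivAt_id x).const_mul r).sub (hasDerivAt_pow 2 x)).congr_deriv (by simp))
    (fun x _ => hvcos x)
    (by apply Continuous.intervalIntegrable; fun_prop)
    (by apply Continuous.intervalIntegrable; exact Real.continuous_sin)
  have step2 := intervalIntegral.integral_mul_deriv_eq_deriv_mul (a := (0:ℝ)) (b := r)
    (u := fun x => r - 2*x) (u' := fun _ => (-2:ℝ))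
    (v := Real.sin) (v' := Real.cos)
    (fun x _ => by exact ((hasDerivAt_const x r).sub ((hasDerivAt_id x).const_mul 2)).congr_deriv (by simp))
    (fun x _ => Real.hasDerivAt_sin x)
    (by apply Continuous.intervalIntegrable; fun_prop)
    (by apply Continuous.intervalIntegrable; exact Real.continuous_cos)
  have flip : (∫ x in (0:ℝ)..r, (r - 2*x) * -Real.cos x)
      = - ∫ x in (0:ℝ)..r, (r - 2*x) * Real.cos x := by
    rw [← intervalIntegral.integral_neg]; congr 1; funext x; ring
  simp only [show r*r - r^2 = 0 by ring, show r*0 - (0:ℝ)^2 = 0 by ring, zero_mul, mul_zero,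
    sub_zero, zero_sub, Real.sin_zero, Real.cos_zero] at step1 step2
  rw [flip] at step1
  norm_num at step1
  simp only [pow_one, Nat.factorial_one, Nat.cast_one, div_one]
  rw [step1, step2, intervalIntegral.integral_const_mul, integral_sin]
  simp only [Real.cos_zero]
  ring

lemma deg_aux (a : ℤ) (p q : Polynomial ℤ) (n : ℕ) (hp : p.natDegree ≤ n+1) (hq : q.natDegree ≤ n) :
    (Polynomial.C a * p - Polynomial.X^2 * q).natDegree ≤ n+2 := by
  apply le_trans (Polynomial.natDegree_sub_le _ _)
  apply max_le
  · exact le_trans (Polynomial.natDegree_C_mul_le a p) (by omega)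
  · exact le_trans Polynomial.natDegree_mul_le (by simp [Polynomial.natDegree_X_pow]; omega)

theorem stmt_3 (r : ℝ) (I : ℕ → ℝ)
    (hI : ∀ n : ℕ, I n = ∫ x in (0:ℝ)..r, (r * x - x ^ 2) ^ n / (n.factorial : ℝ) * Real.sin x) :
    ∀ n : ℕ, ∃ u v : Polynomial ℤ, u.natDegree ≤ n ∧ v.natDegree ≤ n ∧
      I n = (Polynomial.aeval r u) * (1 - Real.cos r) + (Polynomial.aeval r v) * Real.sin r := by
  intro n
  induction n using Nat.twoStepInduction with
  | zero =>
    refine ⟨1, 0, by simp, by simp, ?_⟩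
    rw [hI 0]
    simp [integral_sin]
  | one =>
    refine ⟨Polynomial.C 2, -Polynomial.X, by simp, by simp, ?_⟩
    rw [hI 1, I1_val r]
    simp only [map_neg, Polynomial.aeval_X, map_ofNat, Polynomial.aeval_C, eq_intCast,
      Int.cast_ofNat]
    ring
  | more n ih0 ih1 =>
    obtain ⟨u0, v0, hu0, hv0, h0⟩ := ih0
    obtain ⟨u1, v1, hu1, hv1, h1⟩ := ih1
    refine ⟨Polynomial.C (4*(n:ℤ)+6) * u1 - Polynomial.X^2 * u0,
      Polynomial.C (4*(n:ℤ)+6) * v1 - Polynomial.X^2 * v0,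
      deg_aux _ _ _ _ hu1 hu0, deg_aux _ _ _ _ hv1 hv0, ?_⟩
    rw [hI (n+2), rec_I r n, ← hI (n+1), ← hI n, h0, h1]
    simp only [map_sub, map_mul, map_add, map_pow, map_ofNat, map_intCast, map_natCast,
      Polynomial.aeval_C, Polynomial.aeval_X, eq_intCast]
    ring
end

section
/- If r is a real number with cos r ≠ 1 (equivalently r is not a multiple of 2π), and I_n = ∫₀ʳ (rx - x²)ⁿ/n! · sin x dx, then the sequence (I_n) has infinitely many nonzero terms. -/
open Real intervalIntegral

private lemma cont_aux (r : ℝ) (m : ℕ) :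
    Continuous (fun x : ℝ => (r * x - x ^ 2) ^ m / (m.factorial : ℝ) * Real.sin x) := by
  fun_prop

private lemma rec_aux (r : ℝ) (n : ℕ) :
    (∫ x in (0:ℝ)..r, (r * x - x ^ 2) ^ (n+2) / ((n+2).factorial : ℝ) * Real.sin x)
      = (4 * (n:ℝ) + 6) *
          (∫ x in (0:ℝ)..r, (r * x - x ^ 2) ^ (n+1) / ((n+1).factorial : ℝ) * Real.sin x)
        - r ^ 2 * ∫ x in (0:ℝ)..r, (r * x - x ^ 2) ^ n / (n.factorial : ℝ) * Real.sin x := by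
  have hfac0 : (n.factorial : ℝ) ≠ 0 := Nat.cast_ne_zero.2 n.factorial_ne_zero
  have hfac1 : ((n+1).factorial : ℝ) = (n+1) * n.factorial := by
    push_cast [Nat.factorial_succ]; ring
  have hfac2 : ((n+2).factorial : ℝ) = (n+2) * ((n+1) * n.factorial) := by
    rw [Nat.factorial_succ]; push_cast [hfac1]; ring
  have hu : ∀ x : ℝ, HasDerivAt (fun x => r * x - x ^ 2) (r - 2*x) x := by
    intro x
    have := ((hasDerivAt_id x).const_mul r).sub (hasDerivAt_pow 2 x)
    simpa [Pi.sub_def] using this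
  set g : ℝ → ℝ := fun x =>
    (r - 2*x) * (r*x - x^2)^(n+1) / ((n+1).factorial : ℝ) * Real.sin x
      - (r*x - x^2)^(n+2) / ((n+2).factorial : ℝ) * Real.cos x with hg
  have hderiv : ∀ x : ℝ, HasDerivAt g
      (((r*x - x^2)^(n+2) / ((n+2).factorial : ℝ)
        + r^2 * ((r*x - x^2)^n / (n.factorial : ℝ))
        - (4*(n:ℝ)+6) * ((r*x - x^2)^(n+1) / ((n+1).factorial : ℝ))) * Real.sin x) x := by
    intro x
    have ha : HasDerivAt (fun x : ℝ => r - 2*x) (-2) x := by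
      have := (hasDerivAt_const x r).sub ((hasDerivAt_id x).const_mul 2)
      simpa [Pi.sub_def] using this
    have hb := (hu x).pow (n+1)
    have hc := ((ha.mul hb).div_const ((n+1).factorial : ℝ)).mul (Real.hasDerivAt_sin x)
    have he := (((hu x).pow (n+2)).div_const ((n+2).factorial : ℝ)).mul (Real.hasDerivAt_cos x)
    have hfinal := hc.sub he
    refine hfinal.congr_deriv ?_
    simp only [Pi.mul_apply, Pi.pow_apply, Nat.add_sub_cancel, show n + 2 - 1 = n + 1 from rfl]
    rw [hfac1, hfac2]; push_cast
    field_simp [hfac1, hfac2]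
    ring
  have hint : ∀ m : ℕ, IntervalIntegrable
      (fun x : ℝ => (r * x - x ^ 2) ^ m / (m.factorial : ℝ) * Real.sin x)
      MeasureTheory.volume 0 r := fun m => (cont_aux r m).intervalIntegrable 0 r
  have key : (∫ x in (0:ℝ)..r,
      ((r*x - x^2)^(n+2) / ((n+2).factorial : ℝ)
        + r^2 * ((r*x - x^2)^n / (n.factorial : ℝ))
        - (4*(n:ℝ)+6) * ((r*x - x^2)^(n+1) / ((n+1).factorial : ℝ))) * Real.sin x) = g r - g 0 := by
    apply intervalIntegral.integral_eq_sub_of_hasDerivAt (fun x _ => hderiv x)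
    apply Continuous.intervalIntegrable
    fun_prop
  have hg0 : g 0 = 0 := by simp [hg]
  have hgr : g r = 0 := by
    have : r * r - r ^ 2 = 0 := by ring
    simp [hg, this]
  rw [hg0, hgr, sub_zero] at key
  have expand : (∫ x in (0:ℝ)..r,
      ((r*x - x^2)^(n+2) / ((n+2).factorial : ℝ)
        + r^2 * ((r*x - x^2)^n / (n.factorial : ℝ))
        - (4*(n:ℝ)+6) * ((r*x - x^2)^(n+1) / ((n+1).factorial : ℝ))) * Real.sin x)
      = (∫ x in (0:ℝ)..r, (r * x - x ^ 2) ^ (n+2) / ((n+2).factorial : ℝ) * Real.sin x)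
        + r^2 * (∫ x in (0:ℝ)..r, (r * x - x ^ 2) ^ n / (n.factorial : ℝ) * Real.sin x)
        - (4*(n:ℝ)+6) * (∫ x in (0:ℝ)..r, (r * x - x ^ 2) ^ (n+1) / ((n+1).factorial : ℝ) * Real.sin x) := by
    have h1 := hint (n+2)
    have h2 := (hint n).const_mul (r^2)
    have h3 := (hint (n+1)).const_mul (4*(n:ℝ)+6)
    rw [← intervalIntegral.integral_const_mul, ← intervalIntegral.integral_const_mul,
      ← intervalIntegral.integral_add h1 h2, ← intervalIntegral.integral_sub (h1.add h2) h3]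
    congr 1
    ext x
    ring
  rw [expand] at key
  linarith

theorem stmt_4 (r : ℝ) (hr : Real.cos r ≠ 1) (I : ℕ → ℝ)
    (hI : ∀ n : ℕ, I n = ∫ x in (0:ℝ)..r, (r * x - x ^ 2) ^ n / (n.factorial : ℝ) * Real.sin x) :
    {n : ℕ | I n ≠ 0}.Infinite := by
  by_contra hfin
  rw [Set.not_infinite] at hfin
  obtain ⟨N, hN⟩ := hfin.bddAbove
  have hzero : ∀ n, N < n → I n = 0 := by
    intro n hn
    by_contra hne
    exact absurd (hN hne) (by omega)
  have hr0 : r ≠ 0 := by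
    intro h
    exact hr (by simp [h])
  have hrec : ∀ n : ℕ, I (n+2) = (4*(n:ℝ)+6) * I (n+1) - r^2 * I n := by
    intro n
    rw [hI, hI, hI]
    exact rec_aux r n
  have hdown : ∀ k n : ℕ, n + k = N + 1 → I n = 0 ∧ I (n+1) = 0 := by
    intro k
    induction k with
    | zero =>
      intro n hn
      exact ⟨hzero n (by omega), hzero (n+1) (by omega)⟩
    | succ k ih =>
      intro n hn
      obtain ⟨h1, h2⟩ := ih (n+1) (by omega)
      have h3 := hrec n
      rw [h1, h2] at h3
      have : r ^ 2 * I n = 0 := by linarith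
      have hIn : I n = 0 := by
        rcases mul_eq_zero.1 this with h | h
        · exact absurd h (pow_ne_zero 2 hr0)
        · exact h
      exact ⟨hIn, h1⟩
  have hI0 : I 0 = 1 - Real.cos r := by
    rw [hI]
    simp [integral_sin]
  have := (hdown (N+1) 0 (by omega)).1
  rw [hI0] at this
  exact hr (by linarith)
end

section
/- For every nonzero rational number r, tan r is irrational. -/
noncomputable section LambertAux

open intervalIntegral MeasureTheory.MeasureSpace Set Polynomial Real
open scoped Nat

/-- The sequence of integrals used for Cartwright's proof, generalized. -/
private def lamI (n : ℕ) (θ : ℝ) : ℝ := ∫ x in (-1)..1, (1 - x ^ 2) ^ n * Real.cos (x * θ)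

variable {n : ℕ} {θ : ℝ}

private lemma lamI_zero : lamI 0 θ * θ = 2 * Real.sin θ := by
  rw [mul_comm, lamI]
  simp [mul_integral_comp_mul_right, two_mul]

private lemma lam_recursion' (n : ℕ) :
    lamI (n + 1) θ * θ ^ 2 = - (2 * 2 * ((n + 1) * (0 ^ n * Real.cos θ))) +
      2 * (n + 1) * (2 * n + 1) * lamI n θ - 4 * (n + 1) * n * lamI (n - 1) θ := by
  rw [lamI]
  let f (x : ℝ) : ℝ := 1 - x ^ 2
  let u₁ (x : ℝ) : ℝ := f x ^ (n + 1)
  let u₁' (x : ℝ) : ℝ := - (2 * (n + 1) * x * f x ^ n)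
  let v₁ (x : ℝ) : ℝ := Real.sin (x * θ)
  let v₁' (x : ℝ) : ℝ := Real.cos (x * θ) * θ
  let u₂ (x : ℝ) : ℝ := x * (f x) ^ n
  let u₂' (x : ℝ) : ℝ := (f x) ^ n - 2 * n * x ^ 2 * (f x) ^ (n - 1)
  let v₂ (x : ℝ) : ℝ := Real.cos (x * θ)
  let v₂' (x : ℝ) : ℝ := -Real.sin (x * θ) * θ
  have hfd : Continuous f := by fun_prop
  have hu₁d : Continuous u₁' := by fun_prop
  have hv₁d : Continuous v₁' := by fun_prop
  have hu₂d : Continuous u₂' := by fun_prop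
  have hv₂d : Continuous v₂' := by fun_prop
  have hu₁_eval_one : u₁ 1 = 0 := by simp only [u₁, f]; simp
  have hu₁_eval_neg_one : u₁ (-1) = 0 := by simp only [u₁, f]; simp
  have t : u₂ 1 * v₂ 1 - u₂ (-1) * v₂ (-1) = 2 * (0 ^ n * Real.cos θ) := by
    simp [u₂, v₂, f, ← two_mul]
  have hf (x) : HasDerivAt f (- 2 * x) x := by
    convert (hasDerivAt_pow 2 x).const_sub 1 using 1
    all_goals try rfl
    simp
  have hu₁ (x) : HasDerivAt u₁ (u₁' x) x := by
    convert (hf x).pow _ using 1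
    all_goals try rfl
    simp only [Nat.add_succ_sub_one, u₁', Nat.cast_add_one]
    ring
  have hv₁ (x) : HasDerivAt v₁ (v₁' x) x := (hasDerivAt_mul_const θ).sin
  have hu₂ (x) : HasDerivAt u₂ (u₂' x) x := by
    convert (hasDerivAt_id' x).mul ((hf x).pow _) using 1
    all_goals try rfl
    simp only [u₂', Pi.pow_apply]
    ring
  have hv₂ (x) : HasDerivAt v₂ (v₂' x) x := (hasDerivAt_mul_const θ).cos
  convert_to (∫ (x : ℝ) in (-1)..1, u₁ x * v₁' x) * θ = _ using 1
  · simp_rw [u₁, v₁', ← intervalIntegral.integral_mul_const, sq θ, mul_assoc]; rfl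
  rw [integral_mul_deriv_eq_deriv_mul (fun x _ => hu₁ x) (fun x _ => hv₁ x)
    (hu₁d.intervalIntegrable _ _) (hv₁d.intervalIntegrable _ _), hu₁_eval_one, hu₁_eval_neg_one,
    zero_mul, zero_mul, sub_zero, zero_sub, ← integral_neg, ← integral_mul_const]
  convert_to ((-2 : ℝ) * (n + 1)) * ∫ (x : ℝ) in (-1)..1, (u₂ x * v₂' x) = _ using 1
  · rw [← integral_const_mul]
    congr 1 with x
    dsimp [u₁', v₁, u₂, v₂']
    ring
  rw [integral_mul_deriv_eq_deriv_mul (fun x _ => hu₂ x) (fun x _ => hv₂ x)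
    (hu₂d.intervalIntegrable _ _) (hv₂d.intervalIntegrable _ _),
    mul_sub, t, neg_mul, neg_mul, neg_mul, sub_neg_eq_add]
  have this (x) : u₂' x = (2 * n + 1) * f x ^ n - 2 * n * f x ^ (n - 1) := by
    cases n with
    | zero => simp [u₂']
    | succ n => ring!
  simp_rw [this, sub_mul, mul_assoc _ _ (v₂ _)]
  have : Continuous v₂ := by fun_prop
  rw [mul_mul_mul_comm, integral_sub, mul_sub, add_sub_assoc]
  · congr 1
    simp_rw [integral_const_mul]
    ring!
  all_goals exact Continuous.intervalIntegrable (by fun_prop) _ _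

private lemma lam_recursion (n : ℕ) :
    lamI (n + 2) θ * θ ^ 2 =
      2 * (n + 2) * (2 * n + 3) * lamI (n + 1) θ - 4 * (n + 2) * (n + 1) * lamI n θ := by
  rw [lam_recursion' (n + 1)]
  simp
  ring!

private lemma lamI_one : lamI 1 θ * θ ^ 3 = 4 * Real.sin θ - 4 * θ * Real.cos θ := by
  rw [_root_.pow_succ, ← mul_assoc, lam_recursion' 0, sub_mul, add_mul, mul_assoc _ (lamI 0 θ),
    lamI_zero]
  ring

private def lamSinPoly : ℕ → ℤ[X]
  | 0 => C 2
  | 1 => C 4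
  | (n+2) => ((2 : ℤ) * (2 * n + 3)) • lamSinPoly (n + 1) + monomial 2 (-4) * lamSinPoly n

private def lamCosPoly : ℕ → ℤ[X]
  | 0 => 0
  | 1 => monomial 1 (-4)
  | (n+2) => ((2 : ℤ) * (2 * n + 3)) • lamCosPoly (n + 1) + monomial 2 (-4) * lamCosPoly n

private lemma lamSinPoly_natDegree_le : ∀ n : ℕ, (lamSinPoly n).natDegree ≤ n
  | 0 => by simp [lamSinPoly]
  | 1 => by simp only [natDegree_C, mul_one, zero_le', lamSinPoly]
  | n + 2 => by
      rw [lamSinPoly]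
      refine natDegree_add_le_of_degree_le ((natDegree_smul_le _ _).trans ?_) ?_
      · exact (lamSinPoly_natDegree_le (n + 1)).trans (by simp)
      refine natDegree_mul_le.trans ?_
      simpa [add_comm 2] using lamSinPoly_natDegree_le n

private lemma lamCosPoly_natDegree_le : ∀ n : ℕ, (lamCosPoly n).natDegree ≤ n
  | 0 => by simp [lamCosPoly]
  | 1 => (natDegree_monomial_le _).trans (by simp)
  | n + 2 => by
      rw [lamCosPoly]
      refine natDegree_add_le_of_degree_le ((natDegree_smul_le _ _).trans ?_) ?_
      · exact (lamCosPoly_natDegree_le (n + 1)).trans (by simp)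
      exact natDegree_mul_le.trans (by simp [add_comm 2, lamCosPoly_natDegree_le n])

private lemma lam_sinPoly_add_cosPoly_eval (θ : ℝ) :
    ∀ n : ℕ,
      lamI n θ * θ ^ (2 * n + 1) =
        n ! * ((lamSinPoly n).eval₂ (Int.castRingHom _) θ * Real.sin θ +
        (lamCosPoly n).eval₂ (Int.castRingHom _) θ * Real.cos θ)
  | 0 => by simp [lamSinPoly, lamCosPoly, lamI_zero]
  | 1 => by simp [lamI_one, lamSinPoly, lamCosPoly, sub_eq_add_neg]
  | n + 2 => by
      calc lamI (n + 2) θ * θ ^ (2 * (n + 2) + 1)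
          = lamI (n + 2) θ * θ ^ 2 * θ ^ (2 * n + 3) := by ring
        _ = 2 * (n + 2) * (2 * n + 3) * (lamI (n + 1) θ * θ ^ (2 * (n + 1) + 1)) -
            4 * (n + 2) * (n + 1) * θ ^ 2 * (lamI n θ * θ ^ (2 * n + 1)) := by
              rw [lam_recursion]; ring
        _ = _ := by
              simp [lam_sinPoly_add_cosPoly_eval, lamSinPoly, lamCosPoly, Nat.factorial_succ]
              ring

private lemma lam_is_integer {p : ℤ[X]} (a b : ℤ) {k : ℕ} (hp : p.natDegree ≤ k) :
    ∃ z : ℤ, p.eval₂ (Int.castRingHom ℝ) (a / b) * b ^ k = z := by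
  rcases eq_or_ne b 0 with rfl | hb
  · rcases k.eq_zero_or_pos with rfl | hk
    · exact ⟨p.coeff 0, by simp⟩
    exact ⟨0, by simp [hk.ne']⟩
  refine ⟨∑ i ∈ p.support, p.coeff i * a ^ i * b ^ (k - i), ?_⟩
  conv => lhs; rw [← sum_monomial_eq p]
  rw [eval₂_sum, sum, Finset.sum_mul, Int.cast_sum]
  simp only [eval₂_monomial, eq_intCast, div_pow, Int.cast_mul, Int.cast_pow]
  refine Finset.sum_congr rfl (fun i hi => ?_)
  have ik := (le_natDegree_of_mem_supp i hi).trans hp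
  rw [mul_assoc, div_mul_comm, ← Int.cast_pow, ← Int.cast_pow, ← Int.cast_pow,
    ← pow_sub_mul_pow b ik, ← Int.cast_div_charZero, Int.mul_ediv_cancel _ (pow_ne_zero _ hb),
    ← mul_assoc, mul_right_comm, ← Int.cast_pow]
  exact dvd_mul_left _ _

open Filter

/-- The integral is bounded by 2 in absolute value, for any `θ`. -/
private lemma lamI_abs_le (n : ℕ) (θ : ℝ) : |lamI n θ| ≤ 2 := by
  rw [← Real.norm_eq_abs]
  refine (norm_integral_le_of_norm_le_const ?_).trans (show (1 : ℝ) * _ ≤ _ by norm_num)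
  intros x hx
  simp only [uIoc_of_le, neg_le_self_iff, zero_le_one, mem_Ioc] at hx
  rw [Real.norm_eq_abs, abs_mul, abs_pow]
  refine mul_le_one₀ (pow_le_one₀ (abs_nonneg _) ?_) (abs_nonneg _) (Real.abs_cos_le_one _)
  rw [abs_le]
  constructor <;> nlinarith

/-- If `sin θ ≠ 0`, then for every `N` there is `n ≥ N` with `lamI n θ ≠ 0`. -/
private lemma lamI_freq_ne_zero {θ : ℝ} (hθ : θ ≠ 0) (hs : Real.sin θ ≠ 0) (N : ℕ) :
    ∃ n, N ≤ n ∧ lamI n θ ≠ 0 := by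
  by_contra h
  push_neg at h
  have key : ∀ j : ℕ, lamI (N - j) θ = 0 ∧ lamI (N - j + 1) θ = 0 := by
    intro j
    induction j with
    | zero => exact ⟨h N (by simp), h (N + 1) (by simp)⟩
    | succ j ih =>
      rcases Nat.eq_or_lt_of_le (Nat.sub_le_sub_left (Nat.le_succ j) N) with heq | hlt
      · rw [heq]; exact ih
      · -- N - (j+1) + 1 = N - j
        have h1 : N - (j + 1) + 1 = N - j := by omega
        set m := N - (j + 1) with hm
        have h2 : m + 2 = N - j + 1 := by omega
        refine ⟨?_, by rw [h1]; exact ih.1⟩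
        have hrec := lam_recursion (θ := θ) m
        rw [h1, h2, ih.1, ih.2] at hrec
        simp only [mul_zero, sub_zero, zero_mul] at hrec
        have hc : (4 : ℝ) * (m + 2) * (m + 1) ≠ 0 := by positivity
        have := hrec.symm
        rw [zero_sub, neg_eq_zero] at this
        exact (mul_eq_zero.mp this).resolve_left hc
  have h0 := (key N).1
  simp only [Nat.sub_self] at h0
  have := lamI_zero (θ := θ)
  rw [h0, zero_mul] at this
  exact hs (by linarith [this])

private lemma lam_sin_ne_zero {r : ℚ} (hr : r ≠ 0) : Real.sin (r : ℝ) ≠ 0 := by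
  intro h
  rw [Real.sin_eq_zero_iff] at h
  obtain ⟨n, hn⟩ := h
  rcases eq_or_ne n 0 with rfl | hn0
  · simp at hn
    exact hr (by exact_mod_cast hn.symm)
  · have : Real.pi = (r : ℝ) / (n : ℝ) := by
      field_simp at hn ⊢
      linarith [hn]
    apply irrational_pi.ne_rat (r / (n : ℚ))
    rw [this]
    push_cast
    ring
  
private lemma lam_cos_ne_zero {r : ℚ} (hr : r ≠ 0) : Real.cos (r : ℝ) ≠ 0 := by
  intro h
  rw [Real.cos_eq_zero_iff] at h
  obtain ⟨n, hn⟩ := h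
  have h2 : (2 * (n : ℝ) + 1) ≠ 0 := by
    intro h0
    have : (2 * n + 1 : ℤ) = 0 := by exact_mod_cast h0
    omega
  have : Real.pi = 2 * (r : ℝ) / (2 * (n : ℝ) + 1) := by
    field_simp at hn ⊢
    linarith [hn]
  apply irrational_pi.ne_rat (2 * r / (2 * (n : ℚ) + 1))
  rw [this]
  push_cast
  ring

private lemma lam_tendsto_aux (a : ℝ) :
    Tendsto (fun n => (a : ℝ) ^ (2 * n + 1) / n !) atTop (nhds 0) := by
  rw [← mul_zero a]
  refine ((FloorSemiring.tendsto_pow_div_factorial_atTop (a ^ 2)).const_mul a).congr (fun x => ?_)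
  rw [← pow_mul, mul_div_assoc', _root_.pow_succ']

end LambertAux

open Filter Polynomial in
open scoped Nat in
theorem stmt_5 (r : ℚ) (hr : r ≠ 0) : Irrational (Real.tan r) := by
  rw [Irrational]
  intro hmem
  obtain ⟨q, hq⟩ := hmem
  set θ : ℝ := (r : ℝ) with hθdef
  have hθ : θ ≠ 0 := by rw [hθdef]; exact_mod_cast hr
  have hsin : Real.sin θ ≠ 0 := lam_sin_ne_zero hr
  have hcos : Real.cos θ ≠ 0 := lam_cos_ne_zero hr
  -- θ = a / b
  set a : ℤ := r.num with ha
  set b : ℤ := (r.den : ℤ) with hb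
  have hbpos : (0 : ℤ) < b := by rw [hb]; exact_mod_cast r.pos
  have hab : θ = (a : ℝ) / (b : ℝ) := by
    rw [hθdef, ha, hb]
    exact_mod_cast (Rat.num_div_den r).symm
  have hθb : θ * (b : ℝ) = (a : ℝ) := by
    rw [hab]; field_simp
  -- tan θ = c / d
  set c : ℤ := q.num with hc
  set d : ℤ := (q.den : ℤ) with hd
  have hdpos : (0 : ℤ) < d := by rw [hd]; exact_mod_cast q.pos
  have hcd : Real.sin θ * (d : ℝ) = Real.cos θ * (c : ℝ) := by
    have h1 : Real.tan θ = (c : ℝ) / (d : ℝ) := by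
      rw [← hq, hc, hd]; exact_mod_cast (Rat.num_div_den q).symm
    rw [Real.tan_eq_sin_div_cos] at h1
    field_simp at h1
    linarith [h1]
  -- eventually small
  have hev : ∀ᶠ n : ℕ in atTop,
      |(a : ℝ)| ^ (2 * n + 1) / n ! * (2 * d) < |Real.cos θ| := by
    have h2 : (0 : ℝ) < |Real.cos θ| / (2 * d) := by
      apply div_pos (abs_pos.mpr hcos); positivity
    have := (lam_tendsto_aux |(a : ℝ)|).eventually_lt_const h2
    filter_upwards [this] with n hn
    rw [div_lt_div_iff₀ (by positivity) (by positivity)] at hn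
    calc |(a : ℝ)| ^ (2 * n + 1) / n ! * (2 * d)
        = |(a : ℝ)| ^ (2 * n + 1) * (2 * d) / n ! := by ring
      _ < _ := by
          rw [div_lt_iff₀ (by positivity)]
          calc |(a : ℝ)| ^ (2 * n + 1) * (2 * d) < |Real.cos θ| * n ! := by
                have := hn; nlinarith [this]
            _ = _ := by ring
  obtain ⟨N, hN⟩ := hev.exists_forall_of_atTop
  obtain ⟨n, hnN, hIne⟩ := lamI_freq_ne_zero hθ hsin N
  -- integrality
  obtain ⟨z1, hz1⟩ : ∃ z : ℤ,
      (lamSinPoly n).eval₂ (Int.castRingHom ℝ) ((a : ℝ) / b) * (b : ℝ) ^ (2 * n + 1) = z :=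
    lam_is_integer a b ((lamSinPoly_natDegree_le _).trans (by omega))
  obtain ⟨z2, hz2⟩ : ∃ z : ℤ,
      (lamCosPoly n).eval₂ (Int.castRingHom ℝ) ((a : ℝ) / b) * (b : ℝ) ^ (2 * n + 1) = z :=
    lam_is_integer a b ((lamCosPoly_natDegree_le _).trans (by omega))
  have hkey := lam_sinPoly_add_cosPoly_eval θ n
  -- multiply by b^(2n+1) * d
  have hmain : lamI n θ * (a : ℝ) ^ (2 * n + 1) * d =
      (n ! : ℝ) * Real.cos θ * ((z1 : ℝ) * c + (z2 : ℝ) * d) := by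
    have e1 : lamI n θ * (a : ℝ) ^ (2 * n + 1) * d
        = lamI n θ * θ ^ (2 * n + 1) * (b : ℝ) ^ (2 * n + 1) * d := by
      rw [← hθb, mul_pow]; ring
    rw [e1, hkey, ← hab] at *
    have e2 : ((n ! : ℝ) * (eval₂ (Int.castRingHom ℝ) θ (lamSinPoly n) * Real.sin θ +
        eval₂ (Int.castRingHom ℝ) θ (lamCosPoly n) * Real.cos θ)) * (b : ℝ) ^ (2 * n + 1) * d
        = (n ! : ℝ) * ((z1 : ℝ) * (Real.sin θ * d) + (z2 : ℝ) * (Real.cos θ * d)) := by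
      rw [← hz1, ← hz2]; ring
    rw [e2, hcd]
    ring
  -- the integer is nonzero
  set m : ℤ := z1 * c + z2 * d with hm
  have hmne : m ≠ 0 := by
    intro h0
    apply hIne
    have : lamI n θ * (a : ℝ) ^ (2 * n + 1) * d = 0 := by
      rw [hmain]
      have : ((z1 : ℝ) * c + (z2 : ℝ) * d) = (m : ℝ) := by push_cast [hm]; ring
      rw [this, h0]
      simp
    have hane : (a : ℝ) ≠ 0 := by
      simp only [ne_eq, Int.cast_eq_zero, ha]
      exact Rat.num_ne_zero.mpr hr
    have hdne : (d : ℝ) ≠ 0 := by exact_mod_cast hdpos.ne'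
    rcases mul_eq_zero.mp this with h | h
    · rcases mul_eq_zero.mp h with h | h
      · exact h
      · exact absurd h (pow_ne_zero _ hane)
    · exact absurd h hdne
  -- size contradiction
  have habs : (n ! : ℝ) * |Real.cos θ| ≤ |lamI n θ| * |(a : ℝ)| ^ (2 * n + 1) * d := by
    have h1 : (n ! : ℝ) * |Real.cos θ| * 1 ≤ (n ! : ℝ) * |Real.cos θ| * |(m : ℝ)| := by
      apply mul_le_mul_of_nonneg_left _ (by positivity)
      rw [← Int.cast_abs]
      exact_mod_cast Int.one_le_abs hmne
    have h2 : (n ! : ℝ) * |Real.cos θ| * |(m : ℝ)| = |lamI n θ * (a : ℝ) ^ (2 * n + 1) * d| := by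
      rw [hmain]
      have : ((z1 : ℝ) * c + (z2 : ℝ) * d) = (m : ℝ) := by push_cast [hm]; ring
      rw [this, abs_mul, abs_mul, abs_of_nonneg (by positivity : (0:ℝ) ≤ (n ! : ℝ))]
    rw [mul_one] at h1
    calc (n ! : ℝ) * |Real.cos θ| ≤ |lamI n θ * (a : ℝ) ^ (2 * n + 1) * d| := h2 ▸ h1
      _ = |lamI n θ| * |(a : ℝ)| ^ (2 * n + 1) * d := by
          rw [abs_mul, abs_mul, abs_pow, abs_of_nonneg (by exact_mod_cast hdpos.le : (0:ℝ) ≤ (d:ℝ))]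
  have hsmall := hN n hnN
  have hIle := lamI_abs_le n θ
  have hfac : (0 : ℝ) < (n ! : ℝ) := by positivity
  -- |lamI n θ| * |a|^(2n+1)*d ≤ 2 * |a|^(2n+1) * d < n! * |cos θ|
  have hd0 : (0:ℝ) ≤ (d:ℝ) := by exact_mod_cast hdpos.le
  have hX : (0:ℝ) ≤ |(a:ℝ)| ^ (2 * n + 1) := pow_nonneg (abs_nonneg _) _
  have hle : |lamI n θ| * |(a : ℝ)| ^ (2 * n + 1) * (d : ℝ) ≤
      |(a : ℝ)| ^ (2 * n + 1) * (2 * d) := by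
    calc |lamI n θ| * |(a : ℝ)| ^ (2 * n + 1) * (d : ℝ)
        ≤ 2 * |(a : ℝ)| ^ (2 * n + 1) * d :=
          mul_le_mul_of_nonneg_right (mul_le_mul_of_nonneg_right hIle hX) hd0
      _ = |(a : ℝ)| ^ (2 * n + 1) * (2 * d) := by ring
  rw [div_mul_eq_mul_div, div_lt_iff₀ hfac] at hsmall
  nlinarith [hsmall, habs, hle]
end

section
/- If r is a real number with r² a nonzero rational number, then (tan r)/r is irrational. -/
noncomputable section

open intervalIntegral MeasureTheory.MeasureSpace Set Polynomial Real Filter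
open scoped Nat

private def myI (n : ℕ) (θ : ℝ) : ℝ := ∫ x in (-1)..1, (1 - x ^ 2) ^ n * cos (x * θ)

private lemma myI_zero {θ : ℝ} : myI 0 θ * θ = 2 * sin θ := by
  rw [mul_comm, myI]
  simp [mul_integral_comp_mul_right, two_mul]

private lemma myrecursion' {θ : ℝ} (n : ℕ) :
    myI (n + 1) θ * θ ^ 2 = - (2 * 2 * ((n + 1) * (0 ^ n * cos θ))) +
      2 * (n + 1) * (2 * n + 1) * myI n θ - 4 * (n + 1) * n * myI (n - 1) θ := by
  rw [myI]
  let f (x : ℝ) : ℝ := 1 - x ^ 2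
  let u₁ (x : ℝ) : ℝ := f x ^ (n + 1)
  let u₁' (x : ℝ) : ℝ := - (2 * (n + 1) * x * f x ^ n)
  let v₁ (x : ℝ) : ℝ := sin (x * θ)
  let v₁' (x : ℝ) : ℝ := cos (x * θ) * θ
  let u₂ (x : ℝ) : ℝ := x * (f x) ^ n
  let u₂' (x : ℝ) : ℝ := (f x) ^ n - 2 * n * x ^ 2 * (f x) ^ (n - 1)
  let v₂ (x : ℝ) : ℝ := cos (x * θ)
  let v₂' (x : ℝ) : ℝ := -sin (x * θ) * θ
  have hfd : Continuous f := by fun_prop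
  have hu₁d : Continuous u₁' := by fun_prop
  have hv₁d : Continuous v₁' := by fun_prop
  have hu₂d : Continuous u₂' := by fun_prop
  have hv₂d : Continuous v₂' := by fun_prop
  have hu₁_eval_one : u₁ 1 = 0 := by simp only [u₁, f]; simp
  have hu₁_eval_neg_one : u₁ (-1) = 0 := by simp only [u₁, f]; simp
  have t : u₂ 1 * v₂ 1 - u₂ (-1) * v₂ (-1) = 2 * (0 ^ n * cos θ) := by simp [u₂, v₂, f, ← two_mul]
  have hf (x) : HasDerivAt f (- 2 * x) x := by
    convert (hasDerivAt_pow 2 x).const_sub 1 using 1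
    all_goals first | rfl | simp
  have hu₁ (x) : HasDerivAt u₁ (u₁' x) x := by
    convert (hf x).pow _ using 1
    all_goals try rfl
    simp only [Nat.add_succ_sub_one, u₁', Nat.cast_add_one]
    ring
  have hv₁ (x) : HasDerivAt v₁ (v₁' x) x := (hasDerivAt_mul_const θ).sin
  have hu₂ (x) : HasDerivAt u₂ (u₂' x) x := by
    convert (hasDerivAt_id' x).mul ((hf x).pow _) using 1
    all_goals try rfl
    simp only [u₂', Pi.pow_apply]
    ring
  have hv₂ (x) : HasDerivAt v₂ (v₂' x) x := (hasDerivAt_mul_const θ).cos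
  convert_to (∫ (x : ℝ) in (-1)..1, u₁ x * v₁' x) * θ = _ using 1
  · simp_rw [u₁, v₁', ← intervalIntegral.integral_mul_const, sq θ, mul_assoc]
    rfl
  rw [integral_mul_deriv_eq_deriv_mul (fun x _ => hu₁ x) (fun x _ => hv₁ x)
    (hu₁d.intervalIntegrable _ _) (hv₁d.intervalIntegrable _ _), hu₁_eval_one, hu₁_eval_neg_one,
    zero_mul, zero_mul, sub_zero, zero_sub, ← integral_neg, ← integral_mul_const]
  convert_to ((-2 : ℝ) * (n + 1)) * ∫ (x : ℝ) in (-1)..1, (u₂ x * v₂' x) = _ using 1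
  · rw [← integral_const_mul]
    congr 1 with x
    dsimp [u₁', v₁, u₂, v₂']
    ring
  rw [integral_mul_deriv_eq_deriv_mul (fun x _ => hu₂ x) (fun x _ => hv₂ x)
    (hu₂d.intervalIntegrable _ _) (hv₂d.intervalIntegrable _ _),
    mul_sub, t, neg_mul, neg_mul, neg_mul, sub_neg_eq_add]
  have this (x) : u₂' x = (2 * n + 1) * f x ^ n - 2 * n * f x ^ (n - 1) := by
    cases n with
    | zero => simp [u₂']
    | succ n => ring!
  simp_rw [this, sub_mul, mul_assoc _ _ (v₂ _)]
  have : Continuous v₂ := by fun_prop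
  rw [mul_mul_mul_comm, integral_sub, mul_sub, add_sub_assoc]
  · congr 1
    simp_rw [integral_const_mul]
    ring!
  all_goals exact Continuous.intervalIntegrable (by fun_prop) _ _

private lemma myrecursion {θ : ℝ} (n : ℕ) :
    myI (n + 2) θ * θ ^ 2 =
      2 * (n + 2) * (2 * n + 3) * myI (n + 1) θ - 4 * (n + 2) * (n + 1) * myI n θ := by
  rw [myrecursion' (n + 1)]
  simp
  ring!

private lemma myI_one {θ : ℝ} : myI 1 θ * θ ^ 3 = 4 * sin θ - 4 * θ * cos θ := by
  rw [_root_.pow_succ, ← mul_assoc, myrecursion' 0, sub_mul, add_mul, mul_assoc _ (myI 0 θ),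
    myI_zero]
  ring

private lemma myI_le (n : ℕ) (θ : ℝ) : |myI n θ| ≤ 2 := by
  rw [← Real.norm_eq_abs]
  refine (norm_integral_le_of_norm_le_const ?_).trans (show (1 : ℝ) * _ ≤ _ by norm_num)
  intros x hx
  simp only [uIoc_of_le, neg_le_self_iff, zero_le_one, mem_Ioc] at hx
  rw [Real.norm_eq_abs, abs_mul, abs_pow]
  refine mul_le_one₀ (pow_le_one₀ (abs_nonneg _) ?_) (abs_nonneg _) (abs_cos_le_one _)
  rw [abs_le]
  constructor <;> nlinarith

/-- Integer sequence corresponding to the `sin` coefficient. -/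
private def AA (D N : ℤ) : ℕ → ℤ
  | 0 => 2
  | 1 => 4 * D
  | (n + 2) => 2 * (2 * n + 3) * D * AA D N (n + 1) - 4 * N * D * AA D N n

/-- Integer sequence corresponding to the `cos` coefficient. -/
private def BB (D N : ℤ) : ℕ → ℤ
  | 0 => 0
  | 1 => -4 * D
  | (n + 2) => 2 * (2 * n + 3) * D * BB D N (n + 1) - 4 * N * D * BB D N n


private lemma myabs_aux {r : ℝ} {D : ℤ} (hD : (0:ℝ) < (D : ℝ)) (n : ℕ) :
    |myI n r * r ^ (2 * n + 1) * (D : ℝ) ^ n| ≤ 2 * |r| * (r ^ 2 * (D : ℝ)) ^ n := by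
  rw [abs_mul, abs_mul, abs_pow, abs_pow, abs_of_pos hD, mul_pow]
  have h1 : |r| ^ (2 * n + 1) = |r| * (r ^ 2) ^ n := by
    rw [pow_succ, pow_mul, sq_abs]; ring
  rw [h1]
  calc |myI n r| * (|r| * (r ^ 2) ^ n) * (D : ℝ) ^ n
      ≤ 2 * (|r| * (r ^ 2) ^ n) * (D : ℝ) ^ n := by
        have h2 := myI_le n r
        have h3 : (0:ℝ) ≤ |r| * (r ^ 2) ^ n := by positivity
        have h4 : (0:ℝ) ≤ (D : ℝ) ^ n := by positivity
        exact mul_le_mul_of_nonneg_right (mul_le_mul_of_nonneg_right h2 h3) h4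
    _ = 2 * |r| * ((r ^ 2) ^ n * (D : ℝ) ^ n) := by ring

private lemma mykey {r : ℝ} {D N : ℤ} (hDN : r ^ 2 * D = N) :
    ∀ n : ℕ, myI n r * r ^ (2 * n + 1) * (D : ℝ) ^ n =
      n ! * ((AA D N n : ℝ) * sin r + (BB D N n : ℝ) * (r * cos r))
  | 0 => by
      simp only [AA, BB, pow_zero, mul_one, Nat.factorial_zero, mul_zero, zero_mul]
      push_cast
      rw [show myI 0 r * r ^ (2 * 0 + 1) = myI 0 r * r by ring, myI_zero]
      ring
  | 1 => by
      simp only [AA, BB]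
      push_cast
      rw [show myI 1 r * r ^ (2 * 1 + 1) * (D:ℝ)^1 = myI 1 r * r ^ 3 * D by ring, myI_one]
      rw [Nat.factorial_one]
      ring
  | (n + 2) => by
      have h1 := mykey hDN (n + 1)
      have h0 := mykey hDN n
      have hrec := myrecursion (θ := r) n
      have e1 : myI (n + 2) r * r ^ (2 * (n + 2) + 1) * (D : ℝ) ^ (n + 2) =
          2 * (n + 2) * (2 * n + 3) * (D : ℝ) *
            (myI (n + 1) r * r ^ (2 * (n + 1) + 1) * (D : ℝ) ^ (n + 1)) -
          4 * (n + 2) * (n + 1) * (D : ℝ) * (r ^ 2 * D) *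
            (myI n r * r ^ (2 * n + 1) * (D : ℝ) ^ n) := by
        rw [show myI (n + 2) r * r ^ (2 * (n + 2) + 1) * (D : ℝ) ^ (n + 2) =
            (myI (n + 2) r * r ^ 2) * (r ^ (2 * n + 3) * (D : ℝ) ^ (n + 2)) by ring, hrec]
        ring
      rw [e1, hDN, h1, h0]
      simp only [AA, BB, Nat.factorial_succ]
      push_cast
      ring

theorem stmt_6 (r : ℝ) (q : ℚ) (hq : q ≠ 0) (hr : r ^ 2 = (q : ℝ)) :
    Irrational (Real.tan r / r) := by
  have hr0 : r ≠ 0 := by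
    intro h
    apply hq
    have : (q : ℝ) = 0 := by rw [← hr, h]; ring
    exact_mod_cast this
  set D : ℤ := (q.den : ℤ) with hD
  set N : ℤ := q.num with hN
  have hDpos : (0 : ℝ) < (D : ℝ) := by
    have h := q.pos
    rw [hD]
    push_cast
    exact_mod_cast h
  have hDN : r ^ 2 * (D : ℝ) = (N : ℝ) := by
    rw [hr, Rat.cast_def, hD, hN]
    have : ((q.den : ℤ) : ℝ) ≠ 0 := ne_of_gt hDpos
    push_cast
    field_simp
  have hx0 : (0 : ℝ) ≤ r ^ 2 * (D : ℝ) := by positivity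
  by_contra hcon
  rw [Irrational, not_not, Set.mem_range] at hcon
  obtain ⟨p, hp⟩ := hcon
  have hfact : ∀ n : ℕ, (0:ℝ) < (n ! : ℝ) := fun n => by positivity
  -- In both cases we produce: eventually `myI n r = 0`.
  have hIzero : ∀ᶠ n : ℕ in atTop, myI n r = 0 := by
    by_cases hc : Real.cos r = 0
    · -- cos r = 0 case
      have hsin : |Real.sin r| = 1 := by
        have hs2 : Real.sin r ^ 2 = 1 := by
          have h := Real.sin_sq_add_cos_sq r
          rw [hc] at h; nlinarith
        rw [← Real.sqrt_sq_eq_abs, hs2, Real.sqrt_one]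
      have hbound : ∀ n : ℕ, |((AA D N n : ℝ))| ≤
          (2 * |r|) * ((r ^ 2 * D) ^ n / (n ! : ℝ)) := by
        intro n
        rw [mul_div_assoc', le_div_iff₀ (hfact n)]
        have hk := mykey hDN n
        rw [hc, mul_zero, mul_zero, add_zero] at hk
        calc |(AA D N n : ℝ)| * (n ! : ℝ)
            = |(n ! : ℝ) * ((AA D N n : ℝ) * Real.sin r)| := by
              rw [abs_mul, abs_mul, hsin, mul_one, abs_of_pos (hfact n)]; ring
          _ = |myI n r * r ^ (2 * n + 1) * (D : ℝ) ^ n| := by rw [hk]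
          _ ≤ 2 * |r| * (r ^ 2 * D) ^ n := myabs_aux hDpos n
      have htend : Tendsto (fun n : ℕ => (2 * |r|) * ((r ^ 2 * D) ^ n / (n ! : ℝ)))
          atTop (nhds 0) := by
        have h := (FloorSemiring.tendsto_pow_div_factorial_atTop (r ^ 2 * D)).const_mul (2 * |r|)
        simpa using h
      have hev := htend.eventually_lt_const (show (0:ℝ) < 1 by norm_num)
      filter_upwards [hev] with n hn
      have hA : AA D N n = 0 := by
        have h1 : |(AA D N n : ℝ)| < 1 := lt_of_le_of_lt (hbound n) hn
        have h2 : |AA D N n| < 1 := by exact_mod_cast h1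
        have h3 := abs_lt.mp h2
        omega
      have hk := mykey hDN n
      rw [hc, mul_zero, mul_zero, add_zero, hA] at hk
      simp only [Int.cast_zero, zero_mul, mul_zero] at hk
      have hne : r ^ (2 * n + 1) * (D : ℝ) ^ n ≠ 0 :=
        mul_ne_zero (pow_ne_zero _ hr0) (by positivity)
      have h4 : myI n r * (r ^ (2 * n + 1) * (D : ℝ) ^ n) = 0 := by
        rw [← mul_assoc]; exact hk
      rcases mul_eq_zero.mp h4 with h | h
      · exact h
      · exact absurd h hne
    · -- cos r ≠ 0 case
      have htan : Real.tan r = (p : ℝ) * r := by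
        field_simp at hp
        linarith [hp]
      have hsin : Real.sin r = (p : ℝ) * r * Real.cos r := by
        rw [← htan, Real.tan_eq_sin_div_cos]
        field_simp
      set z : ℕ → ℤ := fun n => AA D N n * p.num + BB D N n * p.den with hz
      have hpden : (0:ℝ) < (p.den : ℝ) := by exact_mod_cast p.pos
      have hrc : (0:ℝ) < |r * Real.cos r| := abs_pos.mpr (mul_ne_zero hr0 hc)
      have hznum : ∀ n : ℕ, (z n : ℝ) * ((n ! : ℝ) * (r * Real.cos r)) =
          (p.den : ℝ) * (myI n r * r ^ (2 * n + 1) * (D : ℝ) ^ n) := by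
        intro n
        have hk := mykey hDN n
        have hpnum : (p.num : ℝ) = (p : ℝ) * (p.den : ℝ) := by
          rw [Rat.cast_def]
          field_simp
        rw [hk, hsin, hz]
        push_cast
        rw [hpnum]
        ring
      have hbound : ∀ n : ℕ, |((z n : ℝ))| ≤
          ((p.den : ℝ) * (2 * |r|) / |r * Real.cos r|) * ((r ^ 2 * D) ^ n / (n ! : ℝ)) := by
        intro n
        rw [div_mul_div_comm, le_div_iff₀ (by positivity :
          (0:ℝ) < |r * Real.cos r| * (n ! : ℝ))]
        calc |(z n : ℝ)| * (|r * Real.cos r| * (n ! : ℝ))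
            = |(z n : ℝ) * ((n ! : ℝ) * (r * Real.cos r))| := by
              rw [abs_mul ((z n : ℝ)), abs_mul ((n ! : ℝ)), abs_of_pos (hfact n)]; ring
          _ = (p.den : ℝ) * |myI n r * r ^ (2 * n + 1) * (D : ℝ) ^ n| := by
              rw [hznum n, abs_mul, abs_of_pos hpden]
          _ ≤ (p.den : ℝ) * (2 * |r| * (r ^ 2 * D) ^ n) := by
              have h := myabs_aux (r := r) hDpos n
              nlinarith [hpden]
          _ = (p.den : ℝ) * (2 * |r|) * (r ^ 2 * D) ^ n := by ring
      have htend : Tendsto (fun n : ℕ =>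
          ((p.den : ℝ) * (2 * |r|) / |r * Real.cos r|) * ((r ^ 2 * D) ^ n / (n ! : ℝ)))
          atTop (nhds 0) := by
        have h := (FloorSemiring.tendsto_pow_div_factorial_atTop (r ^ 2 * D)).const_mul
          ((p.den : ℝ) * (2 * |r|) / |r * Real.cos r|)
        simpa using h
      have hev := htend.eventually_lt_const (show (0:ℝ) < 1 by norm_num)
      filter_upwards [hev] with n hn
      have hzn : z n = 0 := by
        have h1 : |(z n : ℝ)| < 1 := lt_of_le_of_lt (hbound n) hn
        have h2 : |z n| < 1 := by exact_mod_cast h1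
        have h3 := abs_lt.mp h2
        omega
      have h0 : (p.den : ℝ) * (myI n r * (r ^ (2 * n + 1) * (D : ℝ) ^ n)) = 0 := by
        have := hznum n
        rw [hzn] at this
        simp only [Int.cast_zero, zero_mul] at this
        rw [← mul_assoc]
        linarith [this]
      rcases mul_eq_zero.mp h0 with h | h
      · exact absurd h (ne_of_gt hpden)
      · rcases mul_eq_zero.mp h with h' | h'
        · exact h'
        · exact absurd h' (mul_ne_zero (pow_ne_zero _ hr0) (by positivity))
  -- Downward induction: all `myI n r = 0`.
  obtain ⟨M, hM⟩ := eventually_atTop.mp hIzero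
  have hstep : ∀ k : ℕ, myI (M - k) r = 0 ∧ myI (M - k + 1) r = 0 := by
    intro k
    induction k with
    | zero => exact ⟨hM M (by omega), hM (M + 1) (by omega)⟩
    | succ k ih =>
      rcases le_or_gt M k with h | h
      · have e1 : M - (k + 1) = 0 := by omega
        have e2 : M - k = 0 := by omega
        rw [e1]; rw [e2] at ih; exact ih
      · have e : M - k = M - (k + 1) + 1 := by omega
        rw [e] at ih
        obtain ⟨h1, h2⟩ := ih
        refine ⟨?_, h1⟩
        have hrec := myrecursion (θ := r) (M - (k + 1))
        rw [h1, h2] at hrec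
        set m : ℕ := M - (k + 1)
        have hne : (4 : ℝ) * (m + 2) * (m + 1) ≠ 0 := by positivity
        have hmz : (4 : ℝ) * (m + 2) * (m + 1) * myI m r = 0 := by linarith
        rcases mul_eq_zero.mp hmz with h' | h'
        · exact absurd h' hne
        · exact h'
  have h0 : myI 0 r = 0 := by
    have h := hstep M
    rw [Nat.sub_self] at h
    exact h.1
  have h1 : myI 1 r = 0 := by
    have h := hstep M
    rw [Nat.sub_self] at h
    exact h.2
  have hsin0 : Real.sin r = 0 := by
    have h := myI_zero (θ := r)
    rw [h0] at h
    linarith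
  have hcos0 : Real.cos r = 0 := by
    have h := myI_one (θ := r)
    rw [h1, hsin0] at h
    have h2 : 4 * r * Real.cos r = 0 := by linarith
    rcases mul_eq_zero.mp h2 with h3 | h3
    · rcases mul_eq_zero.mp h3 with h4 | h4
      · norm_num at h4
      · exact absurd h4 hr0
    · exact h3
  have hfin := Real.sin_sq_add_cos_sq r
  rw [hsin0, hcos0] at hfin
  norm_num at hfin

end
end

section
/- With f_n(x) = (πx - x²)ⁿ/n! and I_n = ∫₀^π f_n(x) sin x dx, one has I_0 = 2, I_1 = 4, and I_n = (4n-2)I_{n-1} - π²·I_{n-2} for n ≥ 2; consequently every I_n is of the form P(π²) for some polynomial P with integer coefficients. -/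
open Real intervalIntegral

noncomputable def gg (n : ℕ) (x : ℝ) : ℝ := (Real.pi * x - x ^ 2) ^ n / (n.factorial : ℝ)

lemma gg_cont (n : ℕ) : Continuous (gg n) := by
  unfold gg
  exact (((continuous_const.mul continuous_id).sub (continuous_pow 2)).pow n).div_const _

lemma hasDerivAt_gg (k : ℕ) (x : ℝ) :
    HasDerivAt (gg (k+1)) ((Real.pi - 2*x) * gg k x) x := by
  have h1 : HasDerivAt (fun x : ℝ => Real.pi * x - x ^ 2) (Real.pi - 2*x) x := by
    simpa using ((hasDerivAt_id x).const_mul Real.pi).fun_sub (hasDerivAt_pow 2 x)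
  have h2 := (h1.pow (k+1)).div_const ((k+1).factorial : ℝ)
  convert h2 using 1
  all_goals try rfl
  unfold gg
  rw [Nat.factorial_succ]
  have h3 : (k.factorial : ℝ) ≠ 0 := Nat.cast_ne_zero.2 k.factorial_ne_zero
  have h4 : ((k:ℝ) + 1) ≠ 0 := by positivity
  push_cast
  field_simp

lemma key (m : ℕ) :
    ∫ x in (0:ℝ)..Real.pi,
      (gg (m+2) x - (4*(m:ℝ)+6) * gg (m+1) x + Real.pi^2 * gg m x) * Real.sin x = 0 := by
  set H : ℝ → ℝ := fun x =>
    -(gg (m+2) x) * Real.cos x + (Real.pi - 2*x) * gg (m+1) x * Real.sin x with hH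
  have hderiv : ∀ x ∈ Set.uIcc (0:ℝ) Real.pi, HasDerivAt H
      ((gg (m+2) x - (4*(m:ℝ)+6) * gg (m+1) x + Real.pi^2 * gg m x) * Real.sin x) x := by
    intro x _
    have hA := hasDerivAt_gg (m+1) x
    have h1 : HasDerivAt (fun x : ℝ => Real.pi - 2*x) (-2) x := by
      simpa using (hasDerivAt_const x Real.pi).fun_sub ((hasDerivAt_id x).const_mul 2)
    have hB : HasDerivAt (fun x => (Real.pi - 2*x) * gg (m+1) x)
        (-2 * gg (m+1) x + (Real.pi - 2*x) * ((Real.pi - 2*x) * gg m x)) x :=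
      h1.mul (hasDerivAt_gg m x)
    have hH' := ((hA.neg.mul (Real.hasDerivAt_cos x)).add (hB.mul (Real.hasDerivAt_sin x)))
    convert hH' using 1
    all_goals try rfl
    have hfac2 : ((m+2).factorial : ℝ) = ((m:ℝ)+2) * (((m:ℝ)+1) * (m.factorial : ℝ)) := by
      rw [Nat.factorial_succ, Nat.factorial_succ]; push_cast; ring
    have hfac1 : ((m+1).factorial : ℝ) = ((m:ℝ)+1) * (m.factorial : ℝ) := by
      rw [Nat.factorial_succ]; push_cast; ring
    have h3 : (m.factorial : ℝ) ≠ 0 := Nat.cast_ne_zero.2 m.factorial_ne_zero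
    have h4 : ((m:ℝ) + 1) ≠ 0 := by positivity
    have h5 : ((m:ℝ) + 2) ≠ 0 := by positivity
    simp only [gg, hfac2, hfac1, Pi.neg_apply]
    field_simp
    ring
  have hcont : IntervalIntegrable
      (fun x => (gg (m+2) x - (4*(m:ℝ)+6) * gg (m+1) x + Real.pi^2 * gg m x) * Real.sin x)
      MeasureTheory.volume 0 Real.pi :=
    ((((gg_cont (m+2)).sub (continuous_const.mul (gg_cont (m+1)))).add
      (continuous_const.mul (gg_cont m))).mul Real.continuous_sin).intervalIntegrable _ _
  rw [intervalIntegral.integral_eq_sub_of_hasDerivAt hderiv hcont]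
  have hz : Real.pi * Real.pi - Real.pi ^ 2 = 0 := by ring
  have e1 : gg (m+2) Real.pi = 0 := by simp [gg, hz]
  have e2 : gg (m+2) 0 = 0 := by simp [gg]
  have e3 : gg (m+1) 0 = 0 := by simp [gg]
  simp [hH, e1, e2, e3]

theorem stmt_9 (I : ℕ → ℝ)
    (hI : ∀ n : ℕ, I n = ∫ x in (0:ℝ)..Real.pi,
      (Real.pi * x - x ^ 2) ^ n / (n.factorial : ℝ) * Real.sin x) :
    I 0 = 2 ∧ I 1 = 4 ∧
    (∀ n : ℕ, 2 ≤ n → I n = (4 * (n : ℝ) - 2) * I (n - 1) - Real.pi ^ 2 * I (n - 2)) ∧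
    (∀ n : ℕ, ∃ P : Polynomial ℤ, I n = Polynomial.aeval (Real.pi ^ 2) P) := by
  have hIg : ∀ n, I n = ∫ x in (0:ℝ)..Real.pi, gg n x * Real.sin x := by
    intro n; rw [hI n]; rfl
  have h0 : I 0 = 2 := by
    rw [hI 0]
    norm_num [integral_sin]
  have h1 : I 1 = 4 := by
    rw [hI 1]
    have hderiv : ∀ x ∈ Set.uIcc (0:ℝ) Real.pi, HasDerivAt
        (fun x => -(Real.pi * x - x^2) * Real.cos x + (Real.pi - 2*x) * Real.sin x
          - 2 * Real.cos x)
        ((Real.pi * x - x ^ 2) ^ 1 / ((1:ℕ).factorial : ℝ) * Real.sin x) x := by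
      intro x _
      have hu : HasDerivAt (fun x : ℝ => Real.pi * x - x ^ 2) (Real.pi - 2*x) x := by
        simpa using ((hasDerivAt_id x).const_mul Real.pi).fun_sub (hasDerivAt_pow 2 x)
      have h1 : HasDerivAt (fun x : ℝ => Real.pi - 2*x) (-2) x := by
        simpa using (hasDerivAt_const x Real.pi).fun_sub ((hasDerivAt_id x).const_mul 2)
      have h := ((hu.neg.mul (Real.hasDerivAt_cos x)).add
        (h1.mul (Real.hasDerivAt_sin x))).sub
        ((Real.hasDerivAt_cos x).const_mul 2)
      convert h using 1
      all_goals try rfl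
      simp [Nat.factorial]
      ring
    have hcont : IntervalIntegrable
        (fun x => (Real.pi * x - x ^ 2) ^ 1 / ((1:ℕ).factorial : ℝ) * Real.sin x)
        MeasureTheory.volume 0 Real.pi :=
      ((gg_cont 1).mul Real.continuous_sin).intervalIntegrable _ _
    rw [intervalIntegral.integral_eq_sub_of_hasDerivAt hderiv hcont]
    simp
    ring
  have hrec : ∀ n : ℕ, 2 ≤ n →
      I n = (4 * (n : ℝ) - 2) * I (n - 1) - Real.pi ^ 2 * I (n - 2) := by
    intro n hn
    obtain ⟨m, rfl⟩ : ∃ m, n = m + 2 := ⟨n - 2, by omega⟩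
    have hk := key m
    have i2 : IntervalIntegrable (fun x => gg (m+2) x * Real.sin x)
        MeasureTheory.volume 0 Real.pi :=
      ((gg_cont _).mul Real.continuous_sin).intervalIntegrable _ _
    have i1 : IntervalIntegrable (fun x => (4*(m:ℝ)+6) * gg (m+1) x * Real.sin x)
        MeasureTheory.volume 0 Real.pi :=
      ((continuous_const.mul (gg_cont _)).mul Real.continuous_sin).intervalIntegrable _ _
    have i0 : IntervalIntegrable (fun x => Real.pi^2 * gg m x * Real.sin x)
        MeasureTheory.volume 0 Real.pi :=
      ((continuous_const.mul (gg_cont _)).mul Real.continuous_sin).intervalIntegrable _ _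
    have hsplit : (∫ x in (0:ℝ)..Real.pi,
        (gg (m+2) x - (4*(m:ℝ)+6) * gg (m+1) x + Real.pi^2 * gg m x) * Real.sin x)
      = (∫ x in (0:ℝ)..Real.pi, gg (m+2) x * Real.sin x)
        - (∫ x in (0:ℝ)..Real.pi, (4*(m:ℝ)+6) * gg (m+1) x * Real.sin x)
        + (∫ x in (0:ℝ)..Real.pi, Real.pi^2 * gg m x * Real.sin x) := by
      have heq : (fun x => (gg (m+2) x - (4*(m:ℝ)+6) * gg (m+1) x + Real.pi^2 * gg m x) * Real.sin x)
          = fun x => (gg (m+2) x * Real.sin x - (4*(m:ℝ)+6) * gg (m+1) x * Real.sin x)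
            + Real.pi^2 * gg m x * Real.sin x := by funext x; ring
      rw [heq, intervalIntegral.integral_add (i2.sub i1) i0,
        intervalIntegral.integral_sub i2 i1]
    rw [hk] at hsplit
    have c1 : (∫ x in (0:ℝ)..Real.pi, (4*(m:ℝ)+6) * gg (m+1) x * Real.sin x)
        = (4*(m:ℝ)+6) * ∫ x in (0:ℝ)..Real.pi, gg (m+1) x * Real.sin x := by
      rw [← intervalIntegral.integral_const_mul]
      congr 1; funext x; ring
    have c0 : (∫ x in (0:ℝ)..Real.pi, Real.pi^2 * gg m x * Real.sin x)
        = Real.pi^2 * ∫ x in (0:ℝ)..Real.pi, gg m x * Real.sin x := by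
      rw [← intervalIntegral.integral_const_mul]
      congr 1; funext x; ring
    rw [c1, c0, ← hIg (m+2), ← hIg (m+1), ← hIg m] at hsplit
    have e1 : m + 2 - 1 = m + 1 := by omega
    have e2 : m + 2 - 2 = m := by omega
    rw [e1, e2]
    push_cast
    linarith
  refine ⟨h0, h1, hrec, ?_⟩
  intro n
  induction n using Nat.strong_induction_on with
  | _ n ih =>
    match n with
    | 0 => exact ⟨Polynomial.C 2, by rw [h0, Polynomial.aeval_C]; norm_num⟩
    | 1 => exact ⟨Polynomial.C 4, by rw [h1, Polynomial.aeval_C]; norm_num⟩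
    | (m+2) =>
      obtain ⟨P1, hP1⟩ := ih (m+1) (by omega)
      obtain ⟨P2, hP2⟩ := ih m (by omega)
      refine ⟨Polynomial.C (4*(m:ℤ)+6) * P1 - Polynomial.X * P2, ?_⟩
      have hr := hrec (m+2) (by omega)
      have e1 : m + 2 - 1 = m + 1 := by omega
      have e2 : m + 2 - 2 = m := by omega
      rw [e1, e2] at hr
      rw [hr, hP1, hP2]
      simp only [map_sub, map_mul, map_intCast, Polynomial.aeval_C, Polynomial.aeval_X,
        algebraMap_int_eq, eq_intCast]
      push_cast
      ring
end

section
/- For every nonzero rational number r, e^r is irrational. -/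
noncomputable section

open intervalIntegral Real Set Filter
open scoped Nat Topology

private def EI (p n : ℕ) : ℝ := ∫ x in (0:ℝ)..1, (x * (1 - x)) ^ n * Real.exp (p * x)

private lemma EI_zero (p : ℕ) : (p : ℝ) * EI p 0 = Real.exp p - 1 := by
  have h : ∀ x ∈ uIcc (0:ℝ) 1, HasDerivAt (fun x => Real.exp (p * x)) ((p:ℝ) * Real.exp (p * x)) x := by
    intro x _
    simpa [mul_comm] using ((hasDerivAt_mul_const (p:ℝ)).exp)
  have := intervalIntegral.integral_eq_sub_of_hasDerivAt h
    (Continuous.intervalIntegrable (by fun_prop) _ _)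
  simp only [mul_one, mul_zero, Real.exp_zero] at this
  rw [EI]
  simp only [pow_zero, one_mul]
  rw [← intervalIntegral.integral_const_mul, this]

private lemma EI_rec (p n : ℕ) :
    (p:ℝ)^2 * EI p (n+1) = (n+1) * 0^n * (Real.exp p + 1) + (n+1) * n * EI p (n-1)
      - (n+1) * (4*n+2) * EI p n := by
  let f : ℝ → ℝ := fun x => x * (1 - x)
  let u₁ : ℝ → ℝ := fun x => f x ^ (n+1)
  let u₁' : ℝ → ℝ := fun x => (n+1) * f x ^ n * (1 - 2*x)
  let u₂ : ℝ → ℝ := fun x => f x ^ n * (1 - 2*x)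
  let u₂' : ℝ → ℝ := fun x => n * f x ^ (n-1) - (4*n+2) * f x ^ n
  let v : ℝ → ℝ := fun x => Real.exp (p * x)
  let v' : ℝ → ℝ := fun x => p * Real.exp (p * x)
  have hf : ∀ x : ℝ, HasDerivAt f (1 - 2*x) x := by
    intro x
    have : HasDerivAt (fun x : ℝ => x - x^2) (1 - 2*x) x := by
      simpa using (hasDerivAt_id x).fun_sub (hasDerivAt_pow 2 x)
    have heq : f = fun x : ℝ => x - x^2 := by funext y; simp only [f]; ring
    rw [heq]; exact this
  have hu₁ : ∀ x : ℝ, HasDerivAt u₁ (u₁' x) x := by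
    intro x
    have : HasDerivAt (fun y => f y ^ (n+1)) _ x := (hf x).pow (n+1)
    convert this using 1
    simp only [u₁', Nat.add_sub_cancel, Nat.cast_add, Nat.cast_one]
  have hu₂ : ∀ x : ℝ, HasDerivAt u₂ (u₂' x) x := by
    intro x
    have hg : HasDerivAt (fun y : ℝ => 1 - 2*y) (-2) x := by
      simpa using ((hasDerivAt_id x).const_mul 2).const_sub 1
    have h1 : HasDerivAt (fun y => f y ^ n * (1 - 2*y)) _ x := ((hf x).pow n).mul hg
    convert h1 using 1
    simp only [u₂', f, Pi.pow_apply]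
    cases n with
    | zero => push_cast; ring
    | succ m => push_cast [Nat.succ_sub_one]; ring
  have hv : ∀ x : ℝ, HasDerivAt v (v' x) x := by
    intro x
    simpa [v, v', mul_comm] using (hasDerivAt_mul_const (p:ℝ)).exp
  have cu₁' : Continuous u₁' := by fun_prop
  have cu₂  : Continuous u₂ := by fun_prop
  have cu₂' : Continuous u₂' := by fun_prop
  have cv : Continuous v := by fun_prop
  have cv' : Continuous v' := by fun_prop
  have e1 : (∫ x in (0:ℝ)..1, u₁ x * v' x) = - ∫ x in (0:ℝ)..1, u₁' x * v x := by
    rw [integral_mul_deriv_eq_deriv_mul (fun x _ => hu₁ x) (fun x _ => hv x)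
      (cu₁'.intervalIntegrable _ _) (cv'.intervalIntegrable _ _)]
    simp [u₁, f]
  have e2 : (∫ x in (0:ℝ)..1, u₁ x * v' x) = (p:ℝ) * EI p (n+1) := by
    rw [EI, ← intervalIntegral.integral_const_mul]
    refine intervalIntegral.integral_congr fun x _ => ?_
    simp only [u₁, v', f]
    ring
  have e3 : (∫ x in (0:ℝ)..1, u₁' x * v x) = (n+1) * ∫ x in (0:ℝ)..1, u₂ x * v x := by
    rw [← intervalIntegral.integral_const_mul]
    refine intervalIntegral.integral_congr fun x _ => ?_
    simp only [u₁', u₂, v]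
    ring
  have e4 : (∫ x in (0:ℝ)..1, u₂ x * v' x) = -(0:ℝ)^n * (Real.exp p + 1)
      - ∫ x in (0:ℝ)..1, u₂' x * v x := by
    rw [integral_mul_deriv_eq_deriv_mul (fun x _ => hu₂ x) (fun x _ => hv x)
      (cu₂'.intervalIntegrable _ _) (cv'.intervalIntegrable _ _)]
    simp only [u₂, v, f]
    norm_num
    ring
  have e5 : (∫ x in (0:ℝ)..1, u₂ x * v' x) = (p:ℝ) * ∫ x in (0:ℝ)..1, u₂ x * v x := by
    rw [← intervalIntegral.integral_const_mul]
    refine intervalIntegral.integral_congr fun x _ => ?_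
    simp only [u₂, v', v]
    ring
  have e6 : (∫ x in (0:ℝ)..1, u₂' x * v x) = n * EI p (n-1) - (4*n+2) * EI p n := by
    rw [EI, EI, ← intervalIntegral.integral_const_mul, ← intervalIntegral.integral_const_mul,
      ← intervalIntegral.integral_sub]
    · refine intervalIntegral.integral_congr fun x _ => ?_
      simp only [u₂', v, f]
      ring
    · exact Continuous.intervalIntegrable (by fun_prop) _ _
    · exact Continuous.intervalIntegrable (by fun_prop) _ _
  have key : (p:ℝ) * ((p:ℝ) * EI p (n+1)) = (n+1) * ((0:ℝ)^n * (Real.exp p + 1)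
      + n * EI p (n-1) - (4*n+2) * EI p n) := by
    have e7 : (p:ℝ) * (∫ x in (0:ℝ)..1, u₂ x * v x)
        = -(0:ℝ)^n * (Real.exp p + 1) - (n * EI p (n-1) - (4*n+2) * EI p n) := by
      rw [← e5, e4, e6]
    rw [← e2, e1, e3]
    linear_combination (-(n:ℝ) - 1) * e7
  linear_combination key

private lemma EI_key (p : ℕ) : ∀ n : ℕ, ∃ a b : ℤ,
    (p:ℝ)^(2*n+1) * EI p n = n ! * (a + b * Real.exp p) := by
  suffices h : ∀ n : ℕ, (∃ a b : ℤ, (p:ℝ)^(2*n+1) * EI p n = n ! * (a + b * Real.exp p)) ∧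
      (∃ a b : ℤ, (p:ℝ)^(2*(n+1)+1) * EI p (n+1) = (n+1)! * (a + b * Real.exp p)) from
    fun n => (h n).1
  intro n
  induction n with
  | zero =>
    constructor
    · exact ⟨-1, 1, by
        simp only [Nat.factorial_zero, Nat.cast_one]
        push_cast
        linear_combination EI_zero p⟩
    · refine ⟨(p:ℤ) + 2, (p:ℤ) - 2, ?_⟩
      have h1 := EI_rec p 0
      have h0 := EI_zero p
      simp only [Nat.zero_sub] at h1
      push_cast at h1 ⊢
      norm_num at h1 ⊢
      linear_combination (p:ℝ) * h1 - 2 * h0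
  | succ n ih =>
    obtain ⟨⟨a, b, h1⟩, ⟨a', b', h2⟩⟩ := ih
    refine ⟨⟨a', b', h2⟩, (p:ℤ)^2 * a - (4*n+6) * a', (p:ℤ)^2 * b - (4*n+6) * b', ?_⟩
    have hrec := EI_rec p (n+1)
    rw [Nat.add_sub_cancel, zero_pow (Nat.succ_ne_zero n), mul_zero, zero_mul, zero_add] at hrec
    rw [Nat.factorial_succ] at h2
    rw [Nat.factorial_succ, Nat.factorial_succ]
    push_cast at hrec h1 h2 ⊢
    linear_combination (p:ℝ)^(2*n+3) * hrec + ((n:ℝ)+2)*((n:ℝ)+1)*(p:ℝ)^2 * h1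
      - ((n:ℝ)+2)*(4*(n:ℝ)+6) * h2

private lemma EI_pos (p n : ℕ) : 0 < EI p n := by
  refine intervalIntegral.intervalIntegral_pos_of_pos_on
    (Continuous.intervalIntegrable (by fun_prop) _ _) ?_ one_pos
  intro x hx
  exact mul_pos (pow_pos (mul_pos hx.1 (by linarith [hx.2])) _) (Real.exp_pos _)

private lemma EI_le (p n : ℕ) : EI p n ≤ Real.exp p := by
  have h : EI p n ≤ ∫ _x in (0:ℝ)..1, Real.exp p := by
    refine intervalIntegral.integral_mono_on (by norm_num)
      (Continuous.intervalIntegrable (by fun_prop) _ _)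
      (Continuous.intervalIntegrable (by fun_prop) _ _) ?_
    intro x hx
    obtain ⟨hx0, hx1⟩ := hx
    have h1 : (x * (1 - x)) ^ n ≤ 1 :=
      pow_le_one₀ (by nlinarith) (by nlinarith)
    have h2 : Real.exp (p * x) ≤ Real.exp p :=
      Real.exp_le_exp.2 (by nlinarith [Nat.cast_nonneg (α := ℝ) p])
    calc (x * (1-x))^n * Real.exp (p*x) ≤ 1 * Real.exp p := by
          exact mul_le_mul h1 h2 (Real.exp_pos _).le one_pos.le
      _ = Real.exp p := one_mul _
  simpa using h

private lemma exp_nat_irrational (p : ℕ) (hp : 0 < p) : Irrational (Real.exp p) := by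
  by_contra h
  rw [Irrational, not_not, Set.mem_range] at h
  obtain ⟨q, hq⟩ := h
  have H : ∀ n : ℕ, (1:ℝ) ≤ (q.den * p * Real.exp p) * (((p:ℝ)^2)^n / n !) := by
    intro n
    obtain ⟨a, b, hab⟩ := EI_key p n
    set z : ℤ := q.den * a + q.num * b with hz
    have hqr : ((q.num : ℝ)) = (q.den : ℝ) * (q : ℝ) := by
      rw [Rat.cast_def]
      field_simp
    have hzr : (z:ℝ) * n ! = q.den * ((p:ℝ)^(2*n+1) * EI p n) := by
      rw [hab, ← hq, hz]
      push_cast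
      linear_combination (n ! : ℝ) * (b:ℝ) * hqr
    have hfac : (0:ℝ) < (n ! : ℝ) := by positivity
    have hzpos : (0:ℝ) < (z:ℝ) := by
      have : (0:ℝ) < q.den * ((p:ℝ)^(2*n+1) * EI p n) := by
        have := EI_pos p n
        positivity
      nlinarith
    have hz1 : (1:ℝ) ≤ (z:ℝ) := by exact_mod_cast (by exact_mod_cast hzpos : (0:ℤ) < z)
    have hbound : (z:ℝ) * n ! ≤ q.den * ((p:ℝ)^(2*n+1) * Real.exp p) := by
      rw [hzr]
      have h1 : EI p n ≤ Real.exp p := EI_le p n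
      have h2 : (0:ℝ) ≤ (q.den:ℝ) * (p:ℝ)^(2*n+1) := by positivity
      nlinarith
    have key2 : (n ! : ℝ) ≤ q.den * ((p:ℝ)^(2*n+1) * Real.exp p) := by
      nlinarith [hz1, hbound, hfac]
    have hexp : ((p:ℝ)^2)^n * (p:ℝ) = (p:ℝ)^(2*n+1) := by
      rw [← pow_mul, ← pow_succ]
    rw [← hexp] at key2
    have heq : (q.den * p * Real.exp p) * (((p:ℝ)^2)^n / n !)
        = (q.den * (((p:ℝ)^2)^n * p * Real.exp p)) / n ! := by ring
    rw [heq, le_div_iff₀ hfac, one_mul]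
    nlinarith [key2]
  have T : Tendsto (fun n : ℕ => (q.den * p * Real.exp p) * (((p:ℝ)^2)^n / n !))
      atTop (𝓝 0) := by
    have := (FloorSemiring.tendsto_pow_div_factorial_atTop ((p:ℝ)^2)).const_mul
      ((q.den : ℝ) * p * Real.exp p)
    simpa using this
  have := (T.eventually_lt_const (by norm_num : (0:ℝ) < 1)).exists
  obtain ⟨n, hn⟩ := this
  exact absurd (H n) (not_le.2 hn)

end

theorem stmt_11 (r : ℚ) (hr : r ≠ 0) : Irrational (Real.exp r) := by
  by_contra h
  rw [Irrational, not_not, Set.mem_range] at h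
  obtain ⟨s, hs⟩ := h
  have hden : (r.den : ℝ) ≠ 0 := Nat.cast_ne_zero.2 r.den_nz
  have hnum : Real.exp (r.num) = (s:ℝ) ^ r.den := by
    have h1 : ((r.num : ℝ)) = (r.den : ℝ) * (r:ℝ) := by
      rw [Rat.cast_def]
      field_simp
    rw [h1, Real.exp_nat_mul, hs]
  have hnz : r.num ≠ 0 := Rat.num_ne_zero.2 hr
  rcases lt_or_gt_of_ne hnz with hneg | hpos
  · have hm : 0 < (-r.num).toNat := by omega
    have hc : (((-r.num).toNat : ℕ) : ℝ) = -(r.num : ℝ) := by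
      have := Int.toNat_of_nonneg (by omega : (0:ℤ) ≤ -r.num)
      exact_mod_cast congrArg (fun z : ℤ => (z : ℝ)) this
    refine exp_nat_irrational _ hm ⟨(s ^ r.den)⁻¹, ?_⟩
    rw [hc, Real.exp_neg, hnum]
    push_cast
    ring
  · have hm : 0 < r.num.toNat := by omega
    have hc : ((r.num.toNat : ℕ) : ℝ) = (r.num : ℝ) := by
      have := Int.toNat_of_nonneg (by omega : (0:ℤ) ≤ r.num)
      exact_mod_cast congrArg (fun z : ℤ => (z : ℝ)) this
    refine exp_nat_irrational _ hm ⟨s ^ r.den, ?_⟩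
    rw [hc, hnum]
    push_cast
    ring
end

section
/- For a real number r and n ≥ 1, with f_n(z) = (r²z² - z⁴)ⁿ/n!, the four integrals I_n = ∫₀ʳ f_n sin(r-z) dz, J_n = ∫₀ʳ z f_n cos(r-z) dz, K_n = ∫₀ʳ z² f_n sin(r-z) dz, L_n = ∫₀ʳ z³ f_n cos(r-z) dz satisfy: I_n = 4L_{n-1} - 2r²J_{n-1}, J_n = (4n+1)I_n - 2r²K_{n-1}, K_n = -(4n+2)J_n + 2r²L_{n-1}, and L_n = (4n+3)K_n + 2n r² I_n - 2r⁴ K_{n-1}. -/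
set_option maxHeartbeats 1000000

private lemma split4' (a b c1 c2 c3 c4 : ℝ) (f1 f2 f3 f4 : ℝ → ℝ)
    (h1 : Continuous f1) (h2 : Continuous f2) (h3 : Continuous f3) (h4 : Continuous f4) :
    ∫ z in a..b, (c1 * f1 z + c2 * f2 z + c3 * f3 z + c4 * f4 z)
      = c1 * (∫ z in a..b, f1 z) + c2 * (∫ z in a..b, f2 z)
        + c3 * (∫ z in a..b, f3 z) + c4 * (∫ z in a..b, f4 z) := by
  have i1 : IntervalIntegrable (fun z => c1 * f1 z) MeasureTheory.volume a b :=
    (continuous_const.mul h1).intervalIntegrable a b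
  have i2 : IntervalIntegrable (fun z => c2 * f2 z) MeasureTheory.volume a b :=
    (continuous_const.mul h2).intervalIntegrable a b
  have i3 : IntervalIntegrable (fun z => c3 * f3 z) MeasureTheory.volume a b :=
    (continuous_const.mul h3).intervalIntegrable a b
  have i4 : IntervalIntegrable (fun z => c4 * f4 z) MeasureTheory.volume a b :=
    (continuous_const.mul h4).intervalIntegrable a b
  rw [intervalIntegral.integral_add ((i1.add i2).add i3) i4,
      intervalIntegral.integral_add (i1.add i2) i3,
      intervalIntegral.integral_add i1 i2,
      intervalIntegral.integral_const_mul, intervalIntegral.integral_const_mul,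
      intervalIntegral.integral_const_mul, intervalIntegral.integral_const_mul]

theorem stmt_12 (r : ℝ) (I J K L : ℕ → ℝ)
    (hI : ∀ n : ℕ, I n = ∫ z in (0:ℝ)..r,
      (r ^ 2 * z ^ 2 - z ^ 4) ^ n / (n.factorial : ℝ) * Real.sin (r - z))
    (hJ : ∀ n : ℕ, J n = ∫ z in (0:ℝ)..r,
      z * ((r ^ 2 * z ^ 2 - z ^ 4) ^ n / (n.factorial : ℝ)) * Real.cos (r - z))
    (hK : ∀ n : ℕ, K n = ∫ z in (0:ℝ)..r,
      z ^ 2 * ((r ^ 2 * z ^ 2 - z ^ 4) ^ n / (n.factorial : ℝ)) * Real.sin (r - z))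
    (hL : ∀ n : ℕ, L n = ∫ z in (0:ℝ)..r,
      z ^ 3 * ((r ^ 2 * z ^ 2 - z ^ 4) ^ n / (n.factorial : ℝ)) * Real.cos (r - z))
    (n : ℕ) (hn : 1 ≤ n) :
    I n = 4 * L (n - 1) - 2 * r ^ 2 * J (n - 1) ∧
    J n = (4 * (n : ℝ) + 1) * I n - 2 * r ^ 2 * K (n - 1) ∧
    K n = -(4 * (n : ℝ) + 2) * J n + 2 * r ^ 2 * L (n - 1) ∧
    L n = (4 * (n : ℝ) + 3) * K n + 2 * (n : ℝ) * r ^ 2 * I n - 2 * r ^ 4 * K (n - 1) := by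
  obtain ⟨m, rfl⟩ : ∃ m, n = m + 1 := ⟨n - 1, (Nat.succ_pred_eq_of_pos hn).symm⟩
  simp only [Nat.add_sub_cancel]
  have hc0 : ((m.factorial : ℝ)) ≠ 0 := Nat.cast_ne_zero.mpr m.factorial_ne_zero
  have hm1 : (m : ℝ) + 1 ≠ 0 := by positivity
  have hr0 : r ^ 2 * r ^ 2 - r ^ 4 = 0 := by ring
  -- integrand functions
  set fI1 : ℝ → ℝ := fun z => (r ^ 2 * z ^ 2 - z ^ 4) ^ (m+1) / ((m+1).factorial : ℝ) * Real.sin (r - z) with hfI1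
  set fJ1 : ℝ → ℝ := fun z => z * ((r ^ 2 * z ^ 2 - z ^ 4) ^ (m+1) / ((m+1).factorial : ℝ)) * Real.cos (r - z) with hfJ1
  set fK1 : ℝ → ℝ := fun z => z ^ 2 * ((r ^ 2 * z ^ 2 - z ^ 4) ^ (m+1) / ((m+1).factorial : ℝ)) * Real.sin (r - z) with hfK1
  set fL1 : ℝ → ℝ := fun z => z ^ 3 * ((r ^ 2 * z ^ 2 - z ^ 4) ^ (m+1) / ((m+1).factorial : ℝ)) * Real.cos (r - z) with hfL1
  set fI0 : ℝ → ℝ := fun z => (r ^ 2 * z ^ 2 - z ^ 4) ^ m / (m.factorial : ℝ) * Real.sin (r - z) with hfI0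
  set fJ0 : ℝ → ℝ := fun z => z * ((r ^ 2 * z ^ 2 - z ^ 4) ^ m / (m.factorial : ℝ)) * Real.cos (r - z) with hfJ0
  set fK0 : ℝ → ℝ := fun z => z ^ 2 * ((r ^ 2 * z ^ 2 - z ^ 4) ^ m / (m.factorial : ℝ)) * Real.sin (r - z) with hfK0
  set fL0 : ℝ → ℝ := fun z => z ^ 3 * ((r ^ 2 * z ^ 2 - z ^ 4) ^ m / (m.factorial : ℝ)) * Real.cos (r - z) with hfL0
  have cI1 : Continuous fI1 := by rw [hfI1]; fun_prop
  have cJ1 : Continuous fJ1 := by rw [hfJ1]; fun_prop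
  have cK1 : Continuous fK1 := by rw [hfK1]; fun_prop
  have cL1 : Continuous fL1 := by rw [hfL1]; fun_prop
  have cI0 : Continuous fI0 := by rw [hfI0]; fun_prop
  have cJ0 : Continuous fJ0 := by rw [hfJ0]; fun_prop
  have cK0 : Continuous fK0 := by rw [hfK0]; fun_prop
  have cL0 : Continuous fL0 := by rw [hfL0]; fun_prop
  -- basic derivatives
  have hg : ∀ z : ℝ, HasDerivAt (fun z : ℝ => r ^ 2 * z ^ 2 - z ^ 4)
      (2 * r ^ 2 * z - 4 * z ^ 3) z := by
    intro z
    have h1 := ((hasDerivAt_pow 2 z).const_mul (r ^ 2)).sub (hasDerivAt_pow 4 z)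
    refine h1.congr_deriv ?_
    push_cast; ring
  have hcos : ∀ z : ℝ, HasDerivAt (fun z : ℝ => Real.cos (r - z)) (Real.sin (r - z)) z := by
    intro z
    have h1 := (Real.hasDerivAt_cos (r - z)).comp z ((hasDerivAt_id z).const_sub r)
    exact h1.congr_deriv (by simp)
  have hsin : ∀ z : ℝ, HasDerivAt (fun z : ℝ => Real.sin (r - z)) (-Real.cos (r - z)) z := by
    intro z
    have h1 := (Real.hasDerivAt_sin (r - z)).comp z ((hasDerivAt_id z).const_sub r)
    exact h1.congr_deriv (by simp)
  have hfn : ∀ z : ℝ, HasDerivAt (fun z : ℝ => (r ^ 2 * z ^ 2 - z ^ 4) ^ (m+1) / ((m+1).factorial : ℝ))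
      (((m : ℝ) + 1) * (r ^ 2 * z ^ 2 - z ^ 4) ^ m * (2 * r ^ 2 * z - 4 * z ^ 3) / ((m+1).factorial : ℝ)) z := by
    intro z
    have h1 := ((hg z).pow (m+1)).div_const ((m+1).factorial : ℝ)
    refine h1.congr_deriv ?_
    push_cast
    ring
  -- key 1
  have key1 : (1:ℝ) * (∫ z in (0:ℝ)..r, fI1 z) + (-4) * (∫ z in (0:ℝ)..r, fL0 z)
      + (2 * r ^ 2) * (∫ z in (0:ℝ)..r, fJ0 z) + 0 * (∫ z in (0:ℝ)..r, fI1 z) = 0 := by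
    rw [← split4' 0 r 1 (-4) (2 * r ^ 2) 0 fI1 fL0 fJ0 fI1 cI1 cL0 cJ0 cI1]
    rw [intervalIntegral.integral_eq_sub_of_hasDerivAt
      (f := fun z => (r ^ 2 * z ^ 2 - z ^ 4) ^ (m+1) / ((m+1).factorial : ℝ) * Real.cos (r - z))
      (fun z _ => by
        have h1 := (hfn z).mul (hcos z)
        refine h1.congr_deriv ?_
        rw [hfI1, hfL0, hfJ0]
        simp only
        rw [Nat.factorial_succ]
        push_cast
        field_simp
        ring)
      (by apply Continuous.intervalIntegrable; fun_prop)]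
    simp [hr0, zero_pow]
  -- key 2
  have key2 : (1:ℝ) * (∫ z in (0:ℝ)..r, fJ1 z) + (-(4 * ((m:ℝ)+1) + 1)) * (∫ z in (0:ℝ)..r, fI1 z)
      + (2 * r ^ 2) * (∫ z in (0:ℝ)..r, fK0 z) + 0 * (∫ z in (0:ℝ)..r, fI1 z) = 0 := by
    rw [← split4' 0 r 1 (-(4 * ((m:ℝ)+1) + 1)) (2 * r ^ 2) 0 fJ1 fI1 fK0 fI1 cJ1 cI1 cK0 cI1]
    rw [intervalIntegral.integral_eq_sub_of_hasDerivAt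
      (f := fun z => -(z * ((r ^ 2 * z ^ 2 - z ^ 4) ^ (m+1) / ((m+1).factorial : ℝ)) * Real.sin (r - z)))
      (fun z _ => by
        have h1 := (((hasDerivAt_id z).mul (hfn z)).mul (hsin z)).neg
        refine h1.congr_deriv ?_
        rw [hfJ1, hfI1, hfK0]
        simp only [id_eq, Pi.mul_apply]
        rw [Nat.factorial_succ]
        push_cast
        field_simp
        ring)
      (by apply Continuous.intervalIntegrable; fun_prop)]
    simp [hr0, zero_pow]
  -- key 3
  have key3 : (1:ℝ) * (∫ z in (0:ℝ)..r, fK1 z) + (4 * ((m:ℝ)+1) + 2) * (∫ z in (0:ℝ)..r, fJ1 z)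
      + (-(2 * r ^ 2)) * (∫ z in (0:ℝ)..r, fL0 z) + 0 * (∫ z in (0:ℝ)..r, fI1 z) = 0 := by
    rw [← split4' 0 r 1 (4 * ((m:ℝ)+1) + 2) (-(2 * r ^ 2)) 0 fK1 fJ1 fL0 fI1 cK1 cJ1 cL0 cI1]
    rw [intervalIntegral.integral_eq_sub_of_hasDerivAt
      (f := fun z => z ^ 2 * ((r ^ 2 * z ^ 2 - z ^ 4) ^ (m+1) / ((m+1).factorial : ℝ)) * Real.cos (r - z))
      (fun z _ => by
        have h1 := (((hasDerivAt_pow 2 z).mul (hfn z)).mul (hcos z))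
        refine h1.congr_deriv ?_
        rw [hfK1, hfJ1, hfL0]
        simp only [Pi.mul_apply]
        rw [Nat.factorial_succ]
        push_cast
        field_simp
        ring)
      (by apply Continuous.intervalIntegrable; fun_prop)]
    simp [hr0, zero_pow]
  -- key 4
  have key4 : (1:ℝ) * (∫ z in (0:ℝ)..r, fL1 z) + (-(4 * ((m:ℝ)+1) + 3)) * (∫ z in (0:ℝ)..r, fK1 z)
      + (-(2 * ((m:ℝ)+1) * r ^ 2)) * (∫ z in (0:ℝ)..r, fI1 z)
      + (2 * r ^ 4) * (∫ z in (0:ℝ)..r, fK0 z) = 0 := by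
    rw [← split4' 0 r 1 (-(4 * ((m:ℝ)+1) + 3)) (-(2 * ((m:ℝ)+1) * r ^ 2)) (2 * r ^ 4) fL1 fK1 fI1 fK0 cL1 cK1 cI1 cK0]
    rw [intervalIntegral.integral_eq_sub_of_hasDerivAt
      (f := fun z => -(z ^ 3 * ((r ^ 2 * z ^ 2 - z ^ 4) ^ (m+1) / ((m+1).factorial : ℝ)) * Real.sin (r - z)))
      (fun z _ => by
        have h1 := (((hasDerivAt_pow 3 z).mul (hfn z)).mul (hsin z)).neg
        refine h1.congr_deriv ?_
        rw [hfL1, hfK1, hfI1, hfK0]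
        simp only [Pi.mul_apply]
        rw [Nat.factorial_succ]
        push_cast
        field_simp
        ring)
      (by apply Continuous.intervalIntegrable; fun_prop)]
    simp [hr0, zero_pow]
  rw [hI (m+1), hJ (m+1), hK (m+1), hL (m+1), hJ m, hK m, hL m]
  simp only [← hfI1, ← hfJ1, ← hfK1, ← hfL1, ← hfI0, ← hfJ0, ← hfK0, ← hfL0]
  push_cast
  refine ⟨by linear_combination key1, by linear_combination key2, by linear_combination key3,
    by linear_combination key4⟩
end

section
/- For each n ≥ 0 there exist polynomials u_n, v_n with integer coefficients and degrees at most 2n+1 such that I_n = u_n(r²) + v_n(r²)·cos r, where I_n = ∫₀ʳ (r²z² - z⁴)ⁿ/n! · sin(r-z) dz; and the analogous statement holds for J_n, K_n, L_n. -/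
open intervalIntegral Polynomial MeasureTheory

noncomputable def fn (r : ℝ) (n : ℕ) (z : ℝ) : ℝ := (r^2*z^2 - z^4)^n / (n.factorial : ℝ)

@[fun_prop]
lemma fn_cont (r : ℝ) (n : ℕ) : Continuous (fn r n) := by
  unfold fn; fun_prop

lemma hasDerivAt_inner (r z : ℝ) : HasDerivAt (fun z : ℝ => r^2*z^2 - z^4) (2*r^2*z - 4*z^3) z := by
  have h := (((hasDerivAt_pow 2 z).const_mul (r^2)).sub (hasDerivAt_pow 4 z))
  convert h using 1
  all_goals try rfl
  norm_num; ring

lemma fn_hasDerivAt (r : ℝ) (m : ℕ) (z : ℝ) :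
    HasDerivAt (fn r (m+1)) ((2*r^2*z - 4*z^3) * fn r m z) z := by
  have h1 := ((hasDerivAt_inner r z).pow (m+1)).div_const ((m+1).factorial : ℝ)
  convert h1 using 1
  all_goals try rfl
  unfold fn
  rw [Nat.factorial_succ]
  have h2 : (m.factorial : ℝ) ≠ 0 := Nat.cast_ne_zero.mpr m.factorial_ne_zero
  push_cast
  field_simp

lemma fn_mul (r : ℝ) (m : ℕ) (z : ℝ) :
    (r^2*z^2 - z^4) * fn r m z = ((m:ℝ)+1) * fn r (m+1) z := by
  unfold fn
  rw [Nat.factorial_succ, pow_succ]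
  have h2 : (m.factorial : ℝ) ≠ 0 := Nat.cast_ne_zero.mpr m.factorial_ne_zero
  push_cast
  field_simp
  ring

lemma hasDerivAt_cos_sub (r z : ℝ) :
    HasDerivAt (fun z : ℝ => Real.cos (r - z)) (Real.sin (r - z)) z := by
  have h : HasDerivAt (fun z : ℝ => r - z) (-1) z := (hasDerivAt_id z).const_sub r
  have := (Real.hasDerivAt_cos (r - z)).comp z h
  convert this using 1
  all_goals try rfl
  ring

lemma hasDerivAt_sin_sub (r z : ℝ) :
    HasDerivAt (fun z : ℝ => Real.sin (r - z)) (-Real.cos (r - z)) z := by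
  have h : HasDerivAt (fun z : ℝ => r - z) (-1) z := (hasDerivAt_id z).const_sub r
  have := (Real.hasDerivAt_sin (r - z)).comp z h
  convert this using 1
  all_goals try rfl
  ring

lemma fn_zero_left (r : ℝ) (m : ℕ) : fn r (m+1) 0 = 0 := by
  simp [fn]

lemma fn_zero_right (r : ℝ) (m : ℕ) : fn r (m+1) r = 0 := by
  simp [fn]
  left; ring

lemma ftc (r : ℝ) (F g : ℝ → ℝ) (hF : ∀ z, HasDerivAt F (g z) z) (hg : Continuous g) :
    ∫ z in (0:ℝ)..r, g z = F r - F 0 :=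
  intervalIntegral.integral_eq_sub_of_hasDerivAt (fun z _ => hF z) (hg.intervalIntegrable 0 r)

noncomputable def II (r : ℝ) (n : ℕ) : ℝ := ∫ z in (0:ℝ)..r, fn r n z * Real.sin (r-z)
noncomputable def JJ (r : ℝ) (n : ℕ) : ℝ := ∫ z in (0:ℝ)..r, z * fn r n z * Real.cos (r-z)
noncomputable def KK (r : ℝ) (n : ℕ) : ℝ := ∫ z in (0:ℝ)..r, z^2 * fn r n z * Real.sin (r-z)
noncomputable def LL (r : ℝ) (n : ℕ) : ℝ := ∫ z in (0:ℝ)..r, z^3 * fn r n z * Real.cos (r-z)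

lemma ci (r : ℝ) {g : ℝ → ℝ} (hg : Continuous g) : IntervalIntegrable g volume 0 r :=
  hg.intervalIntegrable 0 r

lemma split2 (r : ℝ) {f1 f2 : ℝ → ℝ} (h1 : Continuous f1) (h2 : Continuous f2) :
    ∫ z in (0:ℝ)..r, (f1 z + f2 z) = (∫ z in (0:ℝ)..r, f1 z) + ∫ z in (0:ℝ)..r, f2 z :=
  intervalIntegral.integral_add (ci r h1) (ci r h2)

lemma recI (r : ℝ) (m : ℕ) : II r (m+1) = -(2*r^2) * JJ r m + 4 * LL r m := by
  have key := ftc r (fun z => fn r (m+1) z * Real.cos (r-z))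
    (fun z => fn r (m+1) z * Real.sin (r-z) + (2*r^2*z - 4*z^3) * fn r m z * Real.cos (r-z))
    (fun z => by
      have h := (fn_hasDerivAt r m z).mul (hasDerivAt_cos_sub r z)
      convert h using 1; all_goals try rfl
      ring)
    (by fun_prop)
  try simp only [] at key
  rw [fn_zero_left, fn_zero_right] at key
  simp only [zero_mul, sub_zero] at key
  rw [intervalIntegral.integral_add (ci r (by fun_prop)) (ci r (by fun_prop))] at key
  have h3 : (∫ z in (0:ℝ)..r, (2*r^2*z - 4*z^3) * fn r m z * Real.cos (r-z))
      = 2*r^2 * JJ r m - 4 * LL r m := by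
    rw [JJ, LL, ← intervalIntegral.integral_const_mul, ← intervalIntegral.integral_const_mul,
      ← intervalIntegral.integral_sub (ci r (by fun_prop)) (ci r (by fun_prop))]
    congr 1
    funext z
    ring
  rw [h3] at key
  rw [II]
  linarith

lemma recJ (r : ℝ) (m : ℕ) :
    JJ r (m+1) = (4*((m:ℝ)+1)+1) * II r (m+1) - 2*r^2 * KK r m := by
  have key := ftc r (fun z => -(z * fn r (m+1) z) * Real.sin (r-z))
    (fun z => z * fn r (m+1) z * Real.cos (r-z)
      + ((-1) * (fn r (m+1) z * Real.sin (r-z))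
      + ((2*r^2) * (z^2 * fn r m z * Real.sin (r-z))
      + (-(4*((m:ℝ)+1))) * (fn r (m+1) z * Real.sin (r-z)))))
    (fun z => by
      have h := (((hasDerivAt_id z).mul (fn_hasDerivAt r m z)).neg).mul (hasDerivAt_sin_sub r z)
      convert h using 1
      all_goals try rfl
      simp only [id_eq, Pi.neg_apply, Pi.mul_apply]
      linear_combination (4*Real.sin (r-z)) * fn_mul r m z)
    (by fun_prop)
  try simp only [] at key
  rw [fn_zero_right] at key
  simp only [mul_zero, zero_mul, neg_zero, sub_zero] at key
  rw [split2 r (by fun_prop) (by fun_prop), split2 r (by fun_prop) (by fun_prop),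
    split2 r (by fun_prop) (by fun_prop)] at key
  simp only [intervalIntegral.integral_const_mul] at key
  simp only [II, JJ, KK]
  linear_combination key

lemma recK (r : ℝ) (m : ℕ) :
    KK r (m+1) = -(4*((m:ℝ)+1)+2) * JJ r (m+1) + 2*r^2 * LL r m := by
  have key := ftc r (fun z => z^2 * fn r (m+1) z * Real.cos (r-z))
    (fun z => z^2 * fn r (m+1) z * Real.sin (r-z)
      + ((2:ℝ) * (z * fn r (m+1) z * Real.cos (r-z))
      + ((-(2*r^2)) * (z^3 * fn r m z * Real.cos (r-z))
      + (4*((m:ℝ)+1)) * (z * fn r (m+1) z * Real.cos (r-z)))))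
    (fun z => by
      have h := (((hasDerivAt_pow 2 z).mul (fn_hasDerivAt r m z)).mul (hasDerivAt_cos_sub r z))
      convert h using 1
      all_goals try rfl
      simp only [id_eq, Pi.neg_apply, Pi.mul_apply]
      linear_combination (-(4*z*Real.cos (r-z))) * fn_mul r m z)
    (by fun_prop)
  try simp only [] at key
  rw [fn_zero_right] at key
  simp only [mul_zero, zero_mul, neg_zero, sub_zero, zero_pow, ne_eq, OfNat.ofNat_ne_zero,
    not_false_eq_true] at key
  rw [split2 r (by fun_prop) (by fun_prop), split2 r (by fun_prop) (by fun_prop),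
    split2 r (by fun_prop) (by fun_prop)] at key
  simp only [intervalIntegral.integral_const_mul] at key
  simp only [II, JJ, KK, LL]
  linear_combination key

lemma recL (r : ℝ) (m : ℕ) :
    LL r (m+1) = (4*((m:ℝ)+1)+3) * KK r (m+1) + 2*((m:ℝ)+1)*r^2 * II r (m+1)
      - 2*r^4 * KK r m := by
  have key := ftc r (fun z => -(z^3 * fn r (m+1) z) * Real.sin (r-z))
    (fun z => z^3 * fn r (m+1) z * Real.cos (r-z)
      + ((-3:ℝ) * (z^2 * fn r (m+1) z * Real.sin (r-z))
      + ((2*r^4) * (z^2 * fn r m z * Real.sin (r-z))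
      + ((-(2*((m:ℝ)+1)*r^2)) * (fn r (m+1) z * Real.sin (r-z))
      + (-(4*((m:ℝ)+1))) * (z^2 * fn r (m+1) z * Real.sin (r-z))))))
    (fun z => by
      have h := (((hasDerivAt_pow 3 z).mul (fn_hasDerivAt r m z)).neg).mul (hasDerivAt_sin_sub r z)
      convert h using 1
      all_goals try rfl
      simp only [id_eq, Pi.neg_apply, Pi.mul_apply]
      linear_combination ((2*r^2+4*z^2)*Real.sin (r-z)) * fn_mul r m z)
    (by fun_prop)
  try simp only [] at key
  rw [fn_zero_right] at key
  simp only [mul_zero, zero_mul, neg_zero, sub_zero, zero_pow, ne_eq, OfNat.ofNat_ne_zero,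
    not_false_eq_true, zero_sub, neg_neg] at key
  rw [split2 r (by fun_prop) (by fun_prop), split2 r (by fun_prop) (by fun_prop),
    split2 r (by fun_prop) (by fun_prop), split2 r (by fun_prop) (by fun_prop)] at key
  simp only [intervalIntegral.integral_const_mul] at key
  simp only [II, KK, LL]
  linear_combination key

lemma baseI (r : ℝ) : II r 0 = 1 - Real.cos r := by
  have key := ftc r (fun z => Real.cos (r-z))
    (fun z => fn r 0 z * Real.sin (r-z))
    (fun z => by
      have h := hasDerivAt_cos_sub r z
      convert h using 1
      simp [fn])
    (by fun_prop)
  rw [II, key]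
  simp

lemma baseJ (r : ℝ) : JJ r 0 = 1 - Real.cos r := by
  have key := ftc r (fun z => -(z * Real.sin (r-z)) + Real.cos (r-z))
    (fun z => z * fn r 0 z * Real.cos (r-z))
    (fun z => by
      have h := (((hasDerivAt_id z).mul (hasDerivAt_sin_sub r z)).neg).add (hasDerivAt_cos_sub r z)
      convert h using 1
      all_goals try rfl
      simp [fn, id_eq]
      try ring)
    (by fun_prop)
  rw [JJ, key]
  simp

lemma baseK (r : ℝ) : KK r 0 = r^2 - 2 + 2*Real.cos r := by
  have key := ftc r
    (fun z => z^2 * Real.cos (r-z) + (2*z*Real.sin (r-z) - 2*Real.cos (r-z)))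
    (fun z => z^2 * fn r 0 z * Real.sin (r-z))
    (fun z => by
      have h := ((hasDerivAt_pow 2 z).mul (hasDerivAt_cos_sub r z)).add
        ((((hasDerivAt_id z).const_mul (2:ℝ)).mul (hasDerivAt_sin_sub r z)).sub
          ((hasDerivAt_cos_sub r z).const_mul (2:ℝ)))
      convert h using 1
      all_goals try rfl
      simp [fn, id_eq]
      try ring)
    (by fun_prop)
  rw [KK, key]
  simp
  ring

lemma baseL (r : ℝ) : LL r 0 = 3*r^2 - 6 + 6*Real.cos r := by
  have key := ftc r
    (fun z => -(z^3 * Real.sin (r-z))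
      + 3*(z^2 * Real.cos (r-z) + (2*z*Real.sin (r-z) - 2*Real.cos (r-z))))
    (fun z => z^3 * fn r 0 z * Real.cos (r-z))
    (fun z => by
      have h := (((hasDerivAt_pow 3 z).mul (hasDerivAt_sin_sub r z)).neg).add
        ((((hasDerivAt_pow 2 z).mul (hasDerivAt_cos_sub r z)).add
          ((((hasDerivAt_id z).const_mul (2:ℝ)).mul (hasDerivAt_sin_sub r z)).sub
            ((hasDerivAt_cos_sub r z).const_mul (2:ℝ)))).const_mul (3:ℝ))
      convert h using 1
      all_goals try rfl
      simp [fn, id_eq]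
      try ring)
    (by fun_prop)
  rw [LL, key]
  simp
  ring

lemma degCXp {p : Polynomial ℤ} {d : ℕ} (c : ℤ) (k : ℕ) (h : p.natDegree ≤ d) :
    (C c * X^k * p).natDegree ≤ k + d := by
  apply le_trans (Polynomial.natDegree_mul_le)
  have h1 : (C c * X^k : Polynomial ℤ).natDegree ≤ k :=
    le_trans (Polynomial.natDegree_mul_le)
      (by simp [Polynomial.natDegree_C, Polynomial.natDegree_X_pow])
  omega

lemma degCXp' {p : Polynomial ℤ} {d e : ℕ} (c : ℤ) (k : ℕ) (h : p.natDegree ≤ d)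
    (hkd : k + d ≤ e) : (C c * X^k * p).natDegree ≤ e :=
  le_trans (degCXp c k h) hkd

lemma degAdd {p q : Polynomial ℤ} {d : ℕ} (hp : p.natDegree ≤ d) (hq : q.natDegree ≤ d) :
    (p + q).natDegree ≤ d :=
  le_trans (Polynomial.natDegree_add_le _ _) (max_le hp hq)

abbrev PRep (r x : ℝ) (n : ℕ) : Prop :=
  ∃ u v : Polynomial ℤ, u.natDegree ≤ 2 * n + 1 ∧ v.natDegree ≤ 2 * n + 1 ∧
    x = Polynomial.aeval (r ^ 2) u + Polynomial.aeval (r ^ 2) v * Real.cos r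

lemma master (r : ℝ) : ∀ n : ℕ,
    PRep r (II r n) n ∧ PRep r (JJ r n) n ∧ PRep r (KK r n) n ∧ PRep r (LL r n) n := by
  intro n
  induction n with
  | zero =>
    refine ⟨⟨1, -1, ?_, ?_, ?_⟩, ⟨1, -1, ?_, ?_, ?_⟩,
      ⟨X - C 2, C 2, ?_, ?_, ?_⟩, ⟨C 3 * X - C 6, C 6, ?_, ?_, ?_⟩⟩
    · simp
    · simp
    · rw [baseI]; simp; try ring
    · simp
    · simp
    · rw [baseJ]; simp; try ring
    · compute_degree
    · simp
    · rw [baseK]; simp [map_ofNat]; try ring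
    · compute_degree
    · simp
    · rw [baseL]; push_cast; simp [map_ofNat]; try ring
  | succ m ih =>
    obtain ⟨⟨uI, vI, dI1, dI2, eI⟩, ⟨uJ, vJ, dJ1, dJ2, eJ⟩,
      ⟨uK, vK, dK1, dK2, eK⟩, ⟨uL, vL, dL1, dL2, eL⟩⟩ := ih
    obtain ⟨uI', vI', dI1', dI2', eI'⟩ :
        ∃ u v : Polynomial ℤ, u.natDegree ≤ 2*m+2 ∧ v.natDegree ≤ 2*m+2 ∧
          II r (m+1) = Polynomial.aeval (r ^ 2) u + Polynomial.aeval (r ^ 2) v * Real.cos r := by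
      refine ⟨C (-2) * X^1 * uJ + C 4 * X^0 * uL, C (-2) * X^1 * vJ + C 4 * X^0 * vL, ?_, ?_, ?_⟩
      · exact degAdd (degCXp' _ _ dJ1 (by omega)) (degCXp' _ _ dL1 (by omega))
      · exact degAdd (degCXp' _ _ dJ2 (by omega)) (degCXp' _ _ dL2 (by omega))
      · rw [recI r m, eJ, eL]; push_cast; simp [map_ofNat]; try ring
    obtain ⟨uJ', vJ', dJ1', dJ2', eJ'⟩ :
        ∃ u v : Polynomial ℤ, u.natDegree ≤ 2*m+2 ∧ v.natDegree ≤ 2*m+2 ∧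
          JJ r (m+1) = Polynomial.aeval (r ^ 2) u + Polynomial.aeval (r ^ 2) v * Real.cos r := by
      refine ⟨C (4*(m:ℤ)+5) * X^0 * uI' + C (-2) * X^1 * uK,
        C (4*(m:ℤ)+5) * X^0 * vI' + C (-2) * X^1 * vK, ?_, ?_, ?_⟩
      · exact degAdd (degCXp' _ _ dI1' (by omega)) (degCXp' _ _ dK1 (by omega))
      · exact degAdd (degCXp' _ _ dI2' (by omega)) (degCXp' _ _ dK2 (by omega))
      · rw [recJ r m, eI', eK]; push_cast; simp [map_ofNat]; try ring
    obtain ⟨uK', vK', dK1', dK2', eK'⟩ :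
        ∃ u v : Polynomial ℤ, u.natDegree ≤ 2*m+2 ∧ v.natDegree ≤ 2*m+2 ∧
          KK r (m+1) = Polynomial.aeval (r ^ 2) u + Polynomial.aeval (r ^ 2) v * Real.cos r := by
      refine ⟨C (-(4*(m:ℤ)+6)) * X^0 * uJ' + C 2 * X^1 * uL,
        C (-(4*(m:ℤ)+6)) * X^0 * vJ' + C 2 * X^1 * vL, ?_, ?_, ?_⟩
      · exact degAdd (le_trans (degCXp _ _ dJ1') (by omega)) (degCXp' _ _ dL1 (by omega))
      · exact degAdd (le_trans (degCXp _ _ dJ2') (by omega)) (degCXp' _ _ dL2 (by omega))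
      · rw [recK r m, eJ', eL]; push_cast; simp [map_ofNat]; try ring
    obtain ⟨uL', vL', dL1', dL2', eL'⟩ :
        PRep r (LL r (m+1)) (m+1) := by
      refine ⟨C (4*(m:ℤ)+7) * X^0 * uK' + (C (2*(m:ℤ)+2) * X^1 * uI' + C (-2) * X^2 * uK),
        C (4*(m:ℤ)+7) * X^0 * vK' + (C (2*(m:ℤ)+2) * X^1 * vI' + C (-2) * X^2 * vK), ?_, ?_, ?_⟩
      · exact degAdd (degCXp' _ _ dK1' (by omega))
          (degAdd (d := 2*m+3) (degCXp' _ _ dI1' (by omega)) (degCXp' _ _ dK1 (by omega)))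
      · exact degAdd (degCXp' _ _ dK2' (by omega))
          (degAdd (d := 2*m+3) (degCXp' _ _ dI2' (by omega)) (degCXp' _ _ dK2 (by omega)))
      · rw [recL r m, eK', eI', eK]; push_cast; simp [map_ofNat]; try ring
    exact ⟨⟨uI', vI', le_trans dI1' (by omega), le_trans dI2' (by omega), eI'⟩,
      ⟨uJ', vJ', le_trans dJ1' (by omega), le_trans dJ2' (by omega), eJ'⟩,
      ⟨uK', vK', le_trans dK1' (by omega), le_trans dK2' (by omega), eK'⟩,
      ⟨uL', vL', dL1', dL2', eL'⟩⟩

theorem stmt_14 (r : ℝ) (I J K L : ℕ → ℝ)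
    (hI : ∀ n : ℕ, I n = ∫ z in (0:ℝ)..r,
      (r ^ 2 * z ^ 2 - z ^ 4) ^ n / (n.factorial : ℝ) * Real.sin (r - z))
    (hJ : ∀ n : ℕ, J n = ∫ z in (0:ℝ)..r,
      z * ((r ^ 2 * z ^ 2 - z ^ 4) ^ n / (n.factorial : ℝ)) * Real.cos (r - z))
    (hK : ∀ n : ℕ, K n = ∫ z in (0:ℝ)..r,
      z ^ 2 * ((r ^ 2 * z ^ 2 - z ^ 4) ^ n / (n.factorial : ℝ)) * Real.sin (r - z))
    (hL : ∀ n : ℕ, L n = ∫ z in (0:ℝ)..r,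
      z ^ 3 * ((r ^ 2 * z ^ 2 - z ^ 4) ^ n / (n.factorial : ℝ)) * Real.cos (r - z)) :
    ∀ n : ℕ, ∀ A ∈ ({I, J, K, L} : Set (ℕ → ℝ)),
      ∃ u v : Polynomial ℤ, u.natDegree ≤ 2 * n + 1 ∧ v.natDegree ≤ 2 * n + 1 ∧
        A n = Polynomial.aeval (r ^ 2) u + Polynomial.aeval (r ^ 2) v * Real.cos r := by
  intro n A hA
  simp only [Set.mem_insert_iff, Set.mem_singleton_iff] at hA
  have e1 : I n = II r n := by rw [hI n]; rfl
  have e2 : J n = JJ r n := by rw [hJ n]; rfl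
  have e3 : K n = KK r n := by rw [hK n]; rfl
  have e4 : L n = LL r n := by rw [hL n]; rfl
  obtain ⟨⟨uI, vI, a1, a2, a3⟩, ⟨uJ, vJ, b1, b2, b3⟩,
    ⟨uK, vK, c1, c2, c3⟩, ⟨uL, vL, d1, d2, d3⟩⟩ := master r n
  rcases hA with rfl | rfl | rfl | rfl
  · exact ⟨uI, vI, a1, a2, by rw [e1, a3]⟩
  · exact ⟨uJ, vJ, b1, b2, by rw [e2, b3]⟩
  · exact ⟨uK, vK, c1, c2, by rw [e3, c3]⟩
  · exact ⟨uL, vL, d1, d2, by rw [e4, d3]⟩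
end

section
/- If r ≠ 0, then it is impossible that I_n, J_n, K_n, L_n are all zero for all n ≥ 0; in fact 2I_0 + K_0 = r². -/
open Real intervalIntegral

lemma aux_I0 (r : ℝ) : (∫ z in (0:ℝ)..r, Real.sin (r - z)) = 1 - Real.cos r := by
  have h : ∀ z ∈ Set.uIcc (0:ℝ) r, HasDerivAt (fun z => Real.cos (r - z)) (Real.sin (r - z)) z := by
    intro z _
    have h1 : HasDerivAt (fun z : ℝ => r - z) (-1) z := by
      simpa using (hasDerivAt_id z).const_sub r
    have := (Real.hasDerivAt_cos (r - z)).comp z h1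
    simpa [Function.comp_def] using this
  have := intervalIntegral.integral_eq_sub_of_hasDerivAt h
    (by apply Continuous.intervalIntegrable; fun_prop)
  simpa using this

lemma aux_K0 (r : ℝ) : (∫ z in (0:ℝ)..r, z ^ 2 * Real.sin (r - z))
    = r ^ 2 - 2 + 2 * Real.cos r := by
  have h : ∀ z ∈ Set.uIcc (0:ℝ) r,
      HasDerivAt (fun z => z ^ 2 * Real.cos (r - z) + 2 * z * Real.sin (r - z)
        - 2 * Real.cos (r - z)) (z ^ 2 * Real.sin (r - z)) z := by
    intro z _
    have h1 : HasDerivAt (fun z : ℝ => r - z) (-1) z := by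
      simpa using (hasDerivAt_id z).const_sub r
    have hc : HasDerivAt (fun z : ℝ => Real.cos (r - z)) (Real.sin (r - z)) z := by
      simpa [Function.comp_def] using (Real.hasDerivAt_cos (r - z)).comp z h1
    have hs : HasDerivAt (fun z : ℝ => Real.sin (r - z)) (-Real.cos (r - z)) z := by
      simpa [Function.comp_def] using (Real.hasDerivAt_sin (r - z)).comp z h1
    have hz2 : HasDerivAt (fun z : ℝ => z ^ 2) (2 * z) z := by
      simpa using hasDerivAt_pow 2 z
    have hz : HasDerivAt (fun z : ℝ => 2 * z) 2 z := by
      simpa using (hasDerivAt_id z).const_mul 2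
    have := ((hz2.mul hc).add (hz.mul hs)).sub (hc.const_mul 2)
    convert this using 1
    all_goals first | rfl | ring
  have := intervalIntegral.integral_eq_sub_of_hasDerivAt h
    (by apply Continuous.intervalIntegrable; fun_prop)
  rw [this]
  simp


theorem stmt_15 (r : ℝ) (hr : r ≠ 0) (I J K L : ℕ → ℝ)
    (hI : ∀ n : ℕ, I n = ∫ z in (0:ℝ)..r,
      (r ^ 2 * z ^ 2 - z ^ 4) ^ n / (n.factorial : ℝ) * Real.sin (r - z))
    (hJ : ∀ n : ℕ, J n = ∫ z in (0:ℝ)..r,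
      z * ((r ^ 2 * z ^ 2 - z ^ 4) ^ n / (n.factorial : ℝ)) * Real.cos (r - z))
    (hK : ∀ n : ℕ, K n = ∫ z in (0:ℝ)..r,
      z ^ 2 * ((r ^ 2 * z ^ 2 - z ^ 4) ^ n / (n.factorial : ℝ)) * Real.sin (r - z))
    (hL : ∀ n : ℕ, L n = ∫ z in (0:ℝ)..r,
      z ^ 3 * ((r ^ 2 * z ^ 2 - z ^ 4) ^ n / (n.factorial : ℝ)) * Real.cos (r - z)) :
    (¬ ∀ n : ℕ, I n = 0 ∧ J n = 0 ∧ K n = 0 ∧ L n = 0) ∧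
    2 * I 0 + K 0 = r ^ 2 := by
  have hI0 : I 0 = 1 - Real.cos r := by
    rw [hI 0]
    simp only [pow_zero, Nat.factorial_zero, Nat.cast_one, one_div, inv_one, one_mul]
    exact aux_I0 r
  have hK0 : K 0 = r ^ 2 - 2 + 2 * Real.cos r := by
    rw [hK 0]
    simp only [pow_zero, Nat.factorial_zero, Nat.cast_one, one_div, inv_one, mul_one]
    exact aux_K0 r
  have key : 2 * I 0 + K 0 = r ^ 2 := by rw [hI0, hK0]; ring
  refine ⟨fun hall => ?_, key⟩
  obtain ⟨h1, _, h3, _⟩ := hall 0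
  rw [h1, h3] at key
  simp at key
  exact hr (by nlinarith [sq_abs r, key])
end

section
/- If t is a real number with t² a nonzero rational number, then cosh t is irrational. -/
noncomputable section

open Polynomial Finset intervalIntegral
open scoped Nat

namespace Stmt18Aux

/-- integer-coefficient kernel polynomial -/
private def wz (a b : ℤ) : ℤ[X] := C a * X - C b * X ^ 3

private def wr (a b : ℤ) : ℝ[X] := C (a : ℝ) * X - C (b : ℝ) * X ^ 3

private lemma wr_map (a b : ℤ) :
    ((wz a b) ^ (2 * n)).map (Int.castRingHom ℝ) = (wr a b) ^ (2 * n) := by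
  simp [wz, wr, Polynomial.map_pow, Polynomial.map_sub, Polynomial.map_mul]

private lemma wz_eq (a b : ℤ) (n : ℕ) :
    (wz a b) ^ (2 * n) = X ^ (2 * n) * expand ℤ 2 ((C a - C b * X) ^ (2 * n)) := by
  have h : wz a b = X * (C a - C b * X ^ 2) := by ring_nf; simp [wz]; ring
  rw [h, mul_pow, map_pow, map_sub, expand_C, map_mul, expand_C, expand_X]

private lemma wz_coeff_low (a b : ℤ) (n k : ℕ) (hk : k < 2 * n) :
    ((wz a b) ^ (2 * n)).coeff k = 0 := by
  rw [wz_eq, coeff_X_pow_mul', if_neg (by omega)]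

private lemma wz_coeff_odd (a b : ℤ) (n k : ℕ) (hk : Odd k) :
    ((wz a b) ^ (2 * n)).coeff k = 0 := by
  rw [wz_eq, coeff_X_pow_mul']
  split_ifs with h
  · rw [coeff_expand (by norm_num), if_neg]
    obtain ⟨l, rfl⟩ := hk
    omega
  · rfl


private def fp (a b : ℤ) (n : ℕ) : ℝ[X] := C (((2 * n)! : ℝ)⁻¹) * (wr a b) ^ (2 * n)

private def Fp (a b : ℤ) (n : ℕ) : ℝ[X] :=
  ∑ j ∈ range (3 * n + 1), derivative^[2 * j] (fp a b n)

private lemma natDegree_fp_le (a b : ℤ) (n : ℕ) : (fp a b n).natDegree ≤ 6 * n := by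
  refine (natDegree_C_mul_le _ _).trans ?_
  refine (natDegree_pow_le).trans ?_
  have : (wr a b).natDegree ≤ 3 := by
    refine (natDegree_sub_le _ _).trans ?_
    simp only [max_le_iff]
    constructor
    · exact (natDegree_C_mul_le _ _).trans (by simp)
    · exact (natDegree_C_mul_le _ _).trans (by simp [natDegree_X_pow])
  calc 2 * n * (wr a b).natDegree ≤ 2 * n * 3 := by
        exact Nat.mul_le_mul_left _ this
    _ = 6 * n := by ring

private lemma Fp_ode (a b : ℤ) (n : ℕ) :
    derivative (derivative (Fp a b n)) = Fp a b n - fp a b n := by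
  unfold Fp
  rw [derivative_sum]
  rw [derivative_sum]
  have h1 : ∀ j ∈ range (3 * n + 1),
      derivative (derivative (derivative^[2 * j] (fp a b n)))
        = derivative^[2 * (j + 1)] (fp a b n) := by
    intro j _
    rw [show 2 * (j + 1) = 2 * j + 1 + 1 by ring]
    rw [Function.iterate_succ_apply', Function.iterate_succ_apply']
  rw [Finset.sum_congr rfl h1]
  have h2 : ∑ j ∈ range (3 * n + 1), derivative^[2 * (j + 1)] (fp a b n)
      = ∑ j ∈ range (3 * n + 1 + 1), derivative^[2 * j] (fp a b n) - fp a b n := by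
    rw [Finset.sum_range_succ' (fun j => derivative^[2 * j] (fp a b n)) (3 * n + 1)]
    simp
  rw [h2, Finset.sum_range_succ]
  have h3 : derivative^[2 * (3 * n + 1)] (fp a b n) = 0 := by
    apply iterate_derivative_eq_zero
    have := natDegree_fp_le a b n
    omega
  rw [h3]
  abel


private lemma eval_iter_deriv (p : ℝ[X]) (t : ℝ) (k : ℕ) :
    (derivative^[k] p).eval t = (k ! : ℝ) * (taylor t p).coeff k := by
  rw [taylor_coeff]
  have h := congrFun (factorial_smul_hasseDeriv (R := ℝ) k) p
  rw [← h, LinearMap.smul_apply, eval_smul, nsmul_eq_mul]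

private lemma fp_coeff (a b : ℤ) (n k : ℕ) :
    (fp a b n).coeff k = (((2 * n)! : ℝ))⁻¹ * (((wz a b) ^ (2 * n)).coeff k : ℝ) := by
  rw [fp, coeff_C_mul, ← wr_map, coeff_map]
  simp

private lemma Fp_deriv_zero (a b : ℤ) (n : ℕ) :
    (derivative (Fp a b n)).eval 0 = 0 := by
  rw [← coeff_zero_eq_eval_zero, coeff_derivative]
  have : (Fp a b n).coeff 1 = 0 := by
    unfold Fp
    rw [finset_sum_coeff]
    refine Finset.sum_eq_zero fun j _ => ?_
    rw [coeff_iterate_derivative]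
    have : (fp a b n).coeff (1 + 2 * j) = 0 := by
      rw [fp_coeff, wz_coeff_odd a b n _ ⟨j, by ring⟩]
      simp
    rw [this, smul_zero]
  rw [this, zero_mul]

private def Z0 (a b : ℤ) (n : ℕ) : ℤ :=
  ∑ m ∈ range (2 * n + 1),
    ((2 * n + 2 * m).descFactorial (2 * m) : ℤ) * ((wz a b) ^ (2 * n)).coeff (2 * n + 2 * m)

private lemma descFactorial_cast_eq (n m : ℕ) :
    ((2 * n + 2 * m)! : ℝ) * (((2 * n)! : ℝ))⁻¹ = ((2 * n + 2 * m).descFactorial (2 * m) : ℝ) := by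
  have h := Nat.factorial_mul_descFactorial (show 2 * m ≤ 2 * n + 2 * m by omega)
  have h2 : 2 * n + 2 * m - 2 * m = 2 * n := by omega
  rw [h2] at h
  field_simp
  rw [← h]
  push_cast
  ring

private lemma Fp_eval_sum (a b : ℤ) (n : ℕ) (t : ℝ) :
    (Fp a b n).eval t = ∑ j ∈ range (3 * n + 1), ((2 * j)! : ℝ) * (taylor t (fp a b n)).coeff (2 * j) := by
  unfold Fp
  rw [eval_finset_sum]
  exact Finset.sum_congr rfl fun j _ => eval_iter_deriv _ _ _

private lemma Fp_eval_zero (a b : ℤ) (n : ℕ) :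
    (Fp a b n).eval 0 = ((Z0 a b n : ℤ) : ℝ) := by
  rw [Fp_eval_sum]
  simp only [taylor_zero, LinearMap.id_apply]
  have hsplit : 3 * n + 1 = n + (2 * n + 1) := by omega
  rw [hsplit, Finset.sum_range_add]
  have h1 : ∑ j ∈ range n, ((2 * j)! : ℝ) * (fp a b n).coeff (2 * j) = 0 := by
    refine Finset.sum_eq_zero fun j hj => ?_
    rw [fp_coeff, wz_coeff_low a b n _ (by simp at hj; omega)]
    simp
  rw [h1, zero_add, Z0]
  push_cast
  refine Finset.sum_congr rfl fun m _ => ?_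
  rw [fp_coeff]
  have he : 2 * (n + m) = 2 * n + 2 * m := by ring
  rw [he, ← mul_assoc, descFactorial_cast_eq]


private def ccN (n m : ℕ) : ℕ :=
  ∑ p ∈ Finset.HasAntidiagonal.antidiagonal (2 * m), 2 ^ (2 * n - p.2) * (2 * n).choose p.1 * (2 * n).choose p.2

private def Z1 (a b : ℤ) (n : ℕ) : ℤ :=
  ∑ m ∈ range (2 * n + 1),
    ((2 * n + 2 * m).descFactorial (2 * m) : ℤ) * (a ^ (2 * n - m) * b ^ m * (ccN n m : ℤ))

private lemma taylor_wr_pow (a b : ℤ) (t : ℝ) (habt : (b : ℝ) * t ^ 2 = (a : ℝ)) (n : ℕ) :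
    taylor t ((wr a b) ^ (2 * n))
      = X ^ (2 * n) * (C (-(b : ℝ)) * ((X + C t) * (X + C (2 * t)))) ^ (2 * n) := by
  have hCa : (C (a : ℝ) : ℝ[X]) = C (b : ℝ) * C t * C t := by
    rw [← C_mul, ← C_mul]
    congr 1
    rw [← habt]; ring
  have hw : (wr a b).comp (X + C t)
      = X * (C (-(b : ℝ)) * ((X + C t) * (X + C (2 * t)))) := by
    rw [wr, sub_comp, mul_comp, mul_comp, C_comp, C_comp, X_comp, pow_comp, X_comp, hCa]
    have h2t : (C (2 * t) : ℝ[X]) = C t + C t := by rw [← C_add]; ring_nf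
    rw [h2t, C_neg]
    ring
  rw [taylor_apply, pow_comp, hw, mul_pow]

private lemma V_pow_coeff (a b : ℤ) (t : ℝ) (habt : (b : ℝ) * t ^ 2 = (a : ℝ)) (n m : ℕ)
    (hm : m ≤ 2 * n) :
    ((C (-(b : ℝ)) * ((X + C t) * (X + C (2 * t)))) ^ (2 * n)).coeff (2 * m)
      = ((a ^ (2 * n - m) * b ^ m : ℤ) : ℝ) * (ccN n m : ℝ) := by
  rw [mul_pow, ← C_pow, coeff_C_mul, mul_pow, coeff_mul]
  rw [ccN]
  push_cast
  rw [Finset.mul_sum, Finset.mul_sum]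
  refine Finset.sum_congr rfl fun p hp => ?_
  obtain ⟨i, j⟩ := p
  have hij : i + j = 2 * m := Finset.HasAntidiagonal.mem_antidiagonal.mp hp
  rw [coeff_X_add_C_pow, coeff_X_add_C_pow]
  by_cases hi : i ≤ 2 * n
  · by_cases hj : j ≤ 2 * n
    · have h1 : (2 * t) ^ (2 * n - j) = 2 ^ (2 * n - j) * t ^ (2 * n - j) := by
        rw [mul_pow]
      have h2 : t ^ (2 * n - i) * t ^ (2 * n - j) = (t ^ 2) ^ (2 * n - m) := by
        rw [← pow_add, ← pow_mul]
        congr 1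
        omega
      have h3 : (-(b : ℝ)) ^ (2 * n) = (b : ℝ) ^ m * (b : ℝ) ^ (2 * n - m) := by
        rw [Even.neg_pow ⟨n, by ring⟩, ← pow_add]
        congr 1
        omega
      have h4 : ((b : ℝ)) ^ (2 * n - m) * (t ^ 2) ^ (2 * n - m) = (a : ℝ) ^ (2 * n - m) := by
        rw [← mul_pow, habt]
      calc (-(b:ℝ)) ^ (2*n) * (t ^ (2*n-i) * ((2*n).choose i : ℝ) * ((2*t) ^ (2*n-j) * ((2*n).choose j : ℝ)))
          = ((b:ℝ)^m * ((b:ℝ)^(2*n-m) * (t^2)^(2*n-m))) * (2:ℝ)^(2*n-j) * ((2*n).choose i : ℝ) * ((2*n).choose j : ℝ) := by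
            rw [h1, h3]
            rw [show t ^ (2*n-i) * ((2*n).choose i : ℝ) * (2^(2*n-j) * t^(2*n-j) * ((2*n).choose j : ℝ))
              = (t ^ (2*n-i) * t ^ (2*n-j)) * 2^(2*n-j) * ((2*n).choose i : ℝ) * ((2*n).choose j : ℝ) by ring, h2]
            ring
        _ = (a:ℝ) ^ (2*n-m) * (b:ℝ)^m * ((2:ℝ)^(2*n-j) * ((2*n).choose i : ℝ) * ((2*n).choose j : ℝ)) := by
            rw [h4]; ring
    · rw [Nat.choose_eq_zero_of_lt (show 2 * n < j by omega)]
      push_cast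
      ring
  · rw [Nat.choose_eq_zero_of_lt (show 2*n < i by omega)]
    push_cast
    ring

private lemma taylor_fp_coeff (a b : ℤ) (t : ℝ) (habt : (b : ℝ) * t ^ 2 = (a : ℝ)) (n k : ℕ) :
    (taylor t (fp a b n)).coeff k
      = (((2 * n)! : ℝ))⁻¹ *
        (if 2 * n ≤ k then
          ((C (-(b : ℝ)) * ((X + C t) * (X + C (2 * t)))) ^ (2 * n)).coeff (k - 2 * n) else 0) := by
  have hf : taylor t (fp a b n) = C (((2 * n)! : ℝ)⁻¹) * taylor t ((wr a b) ^ (2 * n)) := by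
    rw [fp, taylor_apply, taylor_apply, mul_comp, C_comp]
  rw [hf, coeff_C_mul, taylor_wr_pow a b t habt n, coeff_X_pow_mul']

private lemma Fp_eval_t (a b : ℤ) (t : ℝ) (habt : (b : ℝ) * t ^ 2 = (a : ℝ)) (n : ℕ) :
    (Fp a b n).eval t = ((Z1 a b n : ℤ) : ℝ) := by
  rw [Fp_eval_sum]
  have hsplit : 3 * n + 1 = n + (2 * n + 1) := by omega
  rw [hsplit, Finset.sum_range_add]
  have h1 : ∑ j ∈ range n, ((2 * j)! : ℝ) * (taylor t (fp a b n)).coeff (2 * j) = 0 := by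
    refine Finset.sum_eq_zero fun j hj => ?_
    rw [taylor_fp_coeff a b t habt, if_neg (by simp at hj; omega)]
    simp
  rw [h1, zero_add, Z1]
  push_cast
  refine Finset.sum_congr rfl fun m hm => ?_
  have hm' : m ≤ 2 * n := by simp at hm; omega
  rw [taylor_fp_coeff a b t habt, if_pos (by omega)]
  have he : 2 * (n + m) - 2 * n = 2 * m := by omega
  rw [he, V_pow_coeff a b t habt n m hm']
  have he2 : 2 * (n + m) = 2 * n + 2 * m := by ring
  rw [he2, ← mul_assoc, descFactorial_cast_eq]
  push_cast
  ring


private lemma fp_eval (a b : ℤ) (n : ℕ) (x : ℝ) :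
    (fp a b n).eval x = ((2 * n)! : ℝ)⁻¹ * ((a : ℝ) * x - (b : ℝ) * x ^ 3) ^ (2 * n) := by
  simp [fp, wr]

private lemma core (a b : ℤ) (ha : 0 < a) (hb : 0 < b) (t : ℝ) (htp : 0 < t)
    (habt : (b : ℝ) * t ^ 2 = (a : ℝ)) (n : ℕ) :
    ∃ Z₀ Z₁ : ℤ, 0 < Real.cosh t * Z₀ - Z₁ ∧
      Real.cosh t * Z₀ - Z₁ ≤ t * Real.sinh t * ((t * (a : ℝ)) ^ (2 * n) / (2 * n)!) := by
  refine ⟨Z0 a b n, Z1 a b n, ?_⟩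
  have hcont : Continuous fun x => (fp a b n).eval x * Real.sinh (t - x) := by
    fun_prop
  have hderiv : ∀ x : ℝ, HasDerivAt
      (fun y => -((derivative (Fp a b n)).eval y * Real.sinh (t - y))
        - (Fp a b n).eval y * Real.cosh (t - y))
      ((fp a b n).eval x * Real.sinh (t - x)) x := by
    intro x
    have h1 : HasDerivAt (fun y : ℝ => t - y) (-1) x := (hasDerivAt_id x).const_sub t
    have hs : HasDerivAt (fun y : ℝ => Real.sinh (t - y)) (-Real.cosh (t - x)) x := by
      have := (Real.hasDerivAt_sinh (t - x)).comp x h1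
      simpa [Function.comp_def] using this
    have hc : HasDerivAt (fun y : ℝ => Real.cosh (t - y)) (-Real.sinh (t - x)) x := by
      have := (Real.hasDerivAt_cosh (t - x)).comp x h1
      simpa [Function.comp_def] using this
    have hFd : HasDerivAt (fun y => (Fp a b n).eval y) ((derivative (Fp a b n)).eval x) x :=
      (Fp a b n).hasDerivAt x
    have hFd' : HasDerivAt (fun y => (derivative (Fp a b n)).eval y)
        ((derivative (derivative (Fp a b n))).eval x) x := (derivative (Fp a b n)).hasDerivAt x
    have := ((hFd'.mul hs).neg).sub (hFd.mul hc)
    refine this.congr_deriv ?_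
    rw [Fp_ode, eval_sub]
    ring
  have hI : (∫ x in (0:ℝ)..t, (fp a b n).eval x * Real.sinh (t - x))
      = Real.cosh t * (Z0 a b n : ℝ) - (Z1 a b n : ℝ) := by
    rw [intervalIntegral.integral_eq_sub_of_hasDerivAt (fun x _ => hderiv x)
      (hcont.intervalIntegrable _ _)]
    simp only [sub_self, Real.sinh_zero, Real.cosh_zero, sub_zero, mul_one, mul_zero, neg_zero]
    rw [Fp_deriv_zero, Fp_eval_zero, Fp_eval_t a b t habt n]
    ring
  rw [← hI]
  constructor
  · refine intervalIntegral_pos_of_pos_on (hcont.intervalIntegrable _ _) ?_ htp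
    intro x hx
    obtain ⟨hx0, hxt⟩ := hx
    have hwpos : 0 < (a : ℝ) * x - (b : ℝ) * x ^ 3 := by
      have h1 : (b : ℝ) * x ^ 2 < (a : ℝ) := by
        rw [← habt]
        have hbp : (0:ℝ) < (b:ℝ) := by exact_mod_cast hb
        have hx2 : x ^ 2 < t ^ 2 := by nlinarith
        nlinarith
      have : (a : ℝ) * x - (b : ℝ) * x ^ 3 = x * ((a : ℝ) - (b : ℝ) * x ^ 2) := by ring
      rw [this]
      apply mul_pos hx0
      linarith
    rw [fp_eval]
    have h2 : (0:ℝ) < ((2 * n)! : ℝ)⁻¹ := by positivity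
    have h3 : 0 < Real.sinh (t - x) := by
      rw [Real.sinh_pos_iff]; linarith
    positivity
  · have hub : ∀ x ∈ Set.uIoc (0:ℝ) t,
        ‖(fp a b n).eval x * Real.sinh (t - x)‖ ≤ (t * (a:ℝ)) ^ (2*n) / (2*n)! * Real.sinh t := by
      intro x hx
      rw [Set.uIoc_of_le htp.le, Set.mem_Ioc] at hx
      obtain ⟨hx0, hxt⟩ := hx
      have hbp : (0:ℝ) < (b:ℝ) := by exact_mod_cast hb
      have hap : (0:ℝ) < (a:ℝ) := by exact_mod_cast ha
      have hw1 : (0:ℝ) ≤ (a : ℝ) * x - (b : ℝ) * x ^ 3 := by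
        have h1 : (b : ℝ) * x ^ 2 ≤ (a : ℝ) := by
          rw [← habt]
          have hx2 : x ^ 2 ≤ t ^ 2 := by nlinarith
          nlinarith
        nlinarith
      have hw2 : (a : ℝ) * x - (b : ℝ) * x ^ 3 ≤ t * (a:ℝ) := by
        have hbx : (0:ℝ) ≤ (b:ℝ) * x ^ 3 := by positivity
        have hax : (a:ℝ) * x ≤ (a:ℝ) * t := mul_le_mul_of_nonneg_left hxt hap.le
        nlinarith
      have hsh : |Real.sinh (t - x)| ≤ Real.sinh t := by
        rw [abs_of_nonneg (by rw [Real.sinh_nonneg_iff]; linarith)]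
        exact Real.sinh_le_sinh.mpr (by linarith)
      rw [norm_mul, Real.norm_eq_abs, Real.norm_eq_abs, fp_eval, abs_mul]
      have h4 : |((2*n)! : ℝ)⁻¹| = ((2*n)! : ℝ)⁻¹ := abs_of_nonneg (by positivity)
      have h5 : |((a : ℝ) * x - (b : ℝ) * x ^ 3) ^ (2*n)| ≤ (t * (a:ℝ)) ^ (2*n) := by
        rw [abs_pow]
        exact pow_le_pow_left₀ (abs_nonneg _) (by rw [abs_of_nonneg hw1]; exact hw2) _
      calc |((2*n)! : ℝ)⁻¹| * |((a : ℝ) * x - (b : ℝ) * x ^ 3) ^ (2*n)| * |Real.sinh (t-x)|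
          ≤ ((2*n)! : ℝ)⁻¹ * (t * (a:ℝ)) ^ (2*n) * Real.sinh t := by
            rw [h4]
            have hshn : (0:ℝ) ≤ Real.sinh t := (Real.sinh_nonneg_iff).mpr htp.le
            apply mul_le_mul (mul_le_mul le_rfl h5 (abs_nonneg _) (by positivity)) hsh
              (abs_nonneg _)
            positivity
        _ = (t * (a:ℝ)) ^ (2*n) / (2*n)! * Real.sinh t := by ring
    have := intervalIntegral.norm_integral_le_of_norm_le_const hub
    rw [Real.norm_eq_abs] at this
    have h6 : (∫ x in (0:ℝ)..t, (fp a b n).eval x * Real.sinh (t - x))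
        ≤ |∫ x in (0:ℝ)..t, (fp a b n).eval x * Real.sinh (t - x)| := le_abs_self _
    refine h6.trans (this.trans ?_)
    rw [abs_of_nonneg (by linarith : (0:ℝ) ≤ t - 0)]
    ring_nf
    nlinarith [Real.sinh_nonneg_iff.mpr htp.le, pow_nonneg (mul_nonneg htp.le
      (show (0:ℝ) ≤ (a:ℝ) by exact_mod_cast ha.le)) (2*n),
      Nat.one_le_iff_ne_zero.mpr (Nat.factorial_ne_zero (2*n))]


private lemma aux (a b : ℤ) (ha : 0 < a) (hb : 0 < b) (t : ℝ) (htp : 0 < t)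
    (habt : (b : ℝ) * t ^ 2 = (a : ℝ)) : Irrational (Real.cosh t) := by
  rintro ⟨r, hr⟩
  have hdenpos : (0:ℝ) < (r.den : ℝ) := by exact_mod_cast r.pos
  have hcosh : Real.cosh t * (r.den : ℝ) = (r.num : ℝ) := by
    rw [← hr, Rat.cast_def]
    field_simp
  -- choose n
  have hK : (0:ℝ) < (r.den : ℝ) * (t * Real.sinh t) + 1 := by
    have : 0 < Real.sinh t := Real.sinh_pos_iff.mpr htp
    positivity
  obtain ⟨n, hn⟩ : ∃ n : ℕ, ((t * (a:ℝ)) ^ 2) ^ n / (n)! <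
      (((r.den : ℝ) * (t * Real.sinh t) + 1))⁻¹ := by
    have h := FloorSemiring.tendsto_pow_div_factorial_atTop ((t * (a:ℝ)) ^ 2)
    have h2 := h.eventually_lt_const (by positivity :
      (0:ℝ) < (((r.den : ℝ) * (t * Real.sinh t) + 1))⁻¹)
    exact h2.exists
  obtain ⟨Z₀, Z₁, hpos, hle⟩ := core a b ha hb t htp habt n
  have hbound : (t * (a:ℝ)) ^ (2 * n) / (2 * n)! ≤ ((t * (a:ℝ)) ^ 2) ^ n / (n)! := by
    rw [← pow_mul]
    have hnum : (0:ℝ) ≤ (t * (a:ℝ)) ^ (2 * n) := by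
      have : (0:ℝ) ≤ (a:ℝ) := by exact_mod_cast ha.le
      positivity
    apply div_le_div_of_nonneg_left hnum
    · exact_mod_cast Nat.factorial_pos n
    · exact_mod_cast Nat.factorial_le (by omega : n ≤ 2 * n)
  set I := Real.cosh t * (Z₀ : ℝ) - (Z₁ : ℝ) with hIdef
  clear_value I
  have hfin : (r.den : ℝ) * I < 1 := by
    have hsh : (0:ℝ) ≤ t * Real.sinh t :=
      mul_nonneg htp.le (Real.sinh_nonneg_iff.mpr htp.le)
    have hy : (0:ℝ) ≤ ((t * (a:ℝ)) ^ 2) ^ n / (n)! := by positivity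
    have h1 : (r.den : ℝ) * I
        ≤ ((r.den : ℝ) * (t * Real.sinh t)) * (((t * (a:ℝ)) ^ 2) ^ n / (n)!) := by
      have hstep : I ≤ t * Real.sinh t * (((t * (a:ℝ)) ^ 2) ^ n / (n)!) :=
        hle.trans (mul_le_mul_of_nonneg_left hbound hsh)
      calc (r.den : ℝ) * I ≤ (r.den : ℝ) * (t * Real.sinh t * (((t * (a:ℝ)) ^ 2) ^ n / (n)!)) :=
            mul_le_mul_of_nonneg_left hstep hdenpos.le
        _ = ((r.den : ℝ) * (t * Real.sinh t)) * (((t * (a:ℝ)) ^ 2) ^ n / (n)!) := by ring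
    have h2 : ((r.den : ℝ) * (t * Real.sinh t)) * (((t * (a:ℝ)) ^ 2) ^ n / (n)!)
        ≤ ((r.den : ℝ) * (t * Real.sinh t) + 1) * (((t * (a:ℝ)) ^ 2) ^ n / (n)!) := by
      nlinarith
    have h3 : ((r.den : ℝ) * (t * Real.sinh t) + 1) * (((t * (a:ℝ)) ^ 2) ^ n / (n)!)
        < ((r.den : ℝ) * (t * Real.sinh t) + 1) * (((r.den : ℝ) * (t * Real.sinh t) + 1))⁻¹ :=
      mul_lt_mul_of_pos_left hn hK
    rw [mul_inv_cancel₀ hK.ne'] at h3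
    linarith
  -- integer in (0,1)
  have hNZ : (r.den : ℝ) * I = ((r.num * Z₀ - (r.den : ℤ) * Z₁ : ℤ) : ℝ) := by
    push_cast
    rw [hIdef]
    have : (r.den : ℝ) * (Real.cosh t * (Z₀ : ℝ)) = (r.num : ℝ) * (Z₀ : ℝ) := by
      rw [← hcosh]; ring
    nlinarith [this]
  have hNpos : (0:ℝ) < ((r.num * Z₀ - (r.den : ℤ) * Z₁ : ℤ) : ℝ) := by
    rw [← hNZ]
    exact mul_pos hdenpos hpos
  have hNlt : ((r.num * Z₀ - (r.den : ℤ) * Z₁ : ℤ) : ℝ) < 1 := by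
    rw [← hNZ]; exact hfin
  have h1 : (1:ℤ) ≤ r.num * Z₀ - (r.den : ℤ) * Z₁ := by
    have : (0:ℤ) < r.num * Z₀ - (r.den : ℤ) * Z₁ := by exact_mod_cast hNpos
    omega
  have : (1:ℝ) ≤ ((r.num * Z₀ - (r.den : ℤ) * Z₁ : ℤ) : ℝ) := by exact_mod_cast h1
  linarith

end Stmt18Aux

theorem stmt_18 (t : ℝ) (q : ℚ) (hq : q ≠ 0) (ht : t ^ 2 = (q : ℝ)) :
    Irrational (Real.cosh t) := by
  have htne : t ≠ 0 := by
    intro h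
    rw [h] at ht
    simp at ht
    exact hq (by exact_mod_cast ht.symm)
  have hqpos : 0 < q := by
    have h1 : (0:ℝ) < (q:ℝ) := by
      rw [← ht]
      positivity
    exact_mod_cast h1
  have hsp : 0 < |t| := abs_pos.mpr htne
  have habt : ((q.den : ℤ) : ℝ) * |t| ^ 2 = ((q.num : ℤ) : ℝ) := by
    rw [sq_abs, ht, Rat.cast_def]
    have : (q.den : ℝ) ≠ 0 := by exact_mod_cast q.den_nz
    field_simp
    norm_cast
  have := Stmt18Aux.aux q.num (q.den : ℤ) (Rat.num_pos.mpr hqpos)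
    (by exact_mod_cast q.pos) |t| hsp habt
  rwa [Real.cosh_abs] at this
end
end
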